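/- arXiv:2510.05409 — 6 statements merged into one kernel-verified Lean document; each statement's English description precedes it below -/
import Mathlib

section
/- Let α ∈ ℝⁿ and δ ≥ 1. Suppose there exists C > 0 such that |⟨ξ,α⟩| ≥ C|ξ|^{-(δ-1)} for every nonzero ξ ∈ ℤⁿ. Then there exists c > 0 such that ‖∇f‖_{L²(𝕋ⁿ)}^{δ-1} · ‖⟨∇f,α⟩‖_{L²(𝕋ⁿ)} ≥ c‖f‖_{L²(𝕋ⁿ)}^δ for every f ∈ H¹(𝕋ⁿ) with mean value zero. -/
/-- Euclidean norm of a frequency `ξ ∈ ℤⁿ`. -/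
noncomputable def znorm {n : ℕ} (ξ : Fin n → ℤ) : ℝ :=
  Real.sqrt (∑ j, ((ξ j : ℝ)) ^ 2)

/-- `L²(𝕋ⁿ)` norm of `f` in terms of its Fourier coefficients (Plancherel). -/
noncomputable def L2norm {n : ℕ} (a : (Fin n → ℤ) → ℂ) : ℝ :=
  Real.sqrt (∑' ξ, ‖a ξ‖ ^ 2)

/-- `L²(𝕋ⁿ)` norm of `∇f` in terms of the Fourier coefficients of `f`. -/
noncomputable def gradL2norm {n : ℕ} (a : (Fin n → ℤ) → ℂ) : ℝ :=
  Real.sqrt (∑' ξ, znorm ξ ^ 2 * ‖a ξ‖ ^ 2)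

/-- `L²(𝕋ⁿ)` norm of the directional derivative `⟨∇f, α⟩` in terms of the
Fourier coefficients of `f`. -/
noncomputable def dirL2norm {n : ℕ} (α : Fin n → ℝ) (a : (Fin n → ℤ) → ℂ) : ℝ :=
  Real.sqrt (∑' ξ, (∑ j, (ξ j : ℝ) * α j) ^ 2 * ‖a ξ‖ ^ 2)

/-- Membership in `H¹(𝕋ⁿ)`, via Fourier coefficients. -/
def memH1 {n : ℕ} (a : (Fin n → ℤ) → ℂ) : Prop :=
  Summable fun ξ => (1 + znorm ξ ^ 2) * ‖a ξ‖ ^ 2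

lemma znorm_nonneg {n : ℕ} (ξ : Fin n → ℤ) : 0 ≤ znorm ξ := Real.sqrt_nonneg _

lemma znorm_sq {n : ℕ} (ξ : Fin n → ℤ) : znorm ξ ^ 2 = ∑ j, ((ξ j : ℝ)) ^ 2 :=
  Real.sq_sqrt (by positivity)

lemma znorm_pos {n : ℕ} {ξ : Fin n → ℤ} (hξ : ξ ≠ 0) : 0 < znorm ξ := by
  apply Real.sqrt_pos.2
  obtain ⟨j, hj⟩ : ∃ j, ξ j ≠ 0 := by
    by_contra hc; push_neg at hc; exact hξ (funext hc)
  refine Finset.sum_pos' (fun i _ => sq_nonneg _) ⟨j, Finset.mem_univ j, ?_⟩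
  have : ((ξ j : ℝ)) ≠ 0 := Int.cast_ne_zero.2 hj
  positivity

lemma memH1.L2_summable {n : ℕ} {a : (Fin n → ℤ) → ℂ} (ha : memH1 a) :
    Summable fun ξ => ‖a ξ‖ ^ 2 := by
  refine Summable.of_nonneg_of_le (fun ξ => by positivity) (fun ξ => ?_) ha
  nlinarith [sq_nonneg (znorm ξ), sq_nonneg ‖a ξ‖]

lemma memH1.grad_summable {n : ℕ} {a : (Fin n → ℤ) → ℂ} (ha : memH1 a) :
    Summable fun ξ => znorm ξ ^ 2 * ‖a ξ‖ ^ 2 := by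
  refine Summable.of_nonneg_of_le (fun ξ => by positivity) (fun ξ => ?_) ha
  nlinarith [sq_nonneg ‖a ξ‖]

lemma memH1.dir_summable {n : ℕ} (α : Fin n → ℝ) {a : (Fin n → ℤ) → ℂ} (ha : memH1 a) :
    Summable fun ξ => (∑ j, (ξ j : ℝ) * α j) ^ 2 * ‖a ξ‖ ^ 2 := by
  refine Summable.of_nonneg_of_le (fun ξ => by positivity) (fun ξ => ?_)
    ((ha.grad_summable).mul_left (∑ j, (α j) ^ 2))
  have h1 : (∑ j, (ξ j : ℝ) * α j) ^ 2 ≤ znorm ξ ^ 2 * ∑ j, (α j) ^ 2 := by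
    rw [znorm_sq]; exact Finset.sum_mul_sq_le_sq_mul_sq _ _ _
  have h2 : (0:ℝ) ≤ ‖a ξ‖ ^ 2 := by positivity
  calc (∑ j, (ξ j : ℝ) * α j) ^ 2 * ‖a ξ‖ ^ 2
      ≤ (znorm ξ ^ 2 * ∑ j, (α j) ^ 2) * ‖a ξ‖ ^ 2 := mul_le_mul_of_nonneg_right h1 h2
    _ = (∑ j, (α j) ^ 2) * (znorm ξ ^ 2 * ‖a ξ‖ ^ 2) := by ring

theorem stmt4 {n : ℕ} (α : Fin n → ℝ) (δ : ℝ) (hδ : 1 ≤ δ)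
    (h : ∃ C > 0, ∀ ξ : Fin n → ℤ, ξ ≠ 0 →
      |∑ j, (ξ j : ℝ) * α j| ≥ C * znorm ξ ^ (-(δ - 1))) :
    ∃ c > 0, ∀ a : (Fin n → ℤ) → ℂ, memH1 a → a 0 = 0 →
      gradL2norm a ^ (δ - 1) * dirL2norm α a ≥ c * L2norm a ^ δ := by
  obtain ⟨C, hC, hCb⟩ := h
  refine ⟨C, hC, fun a ha ha0 => ?_⟩
  have hS0n : (0:ℝ) ≤ ∑' ξ, ‖a ξ‖ ^ 2 := tsum_nonneg fun ξ => by positivity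
  have hSGn : (0:ℝ) ≤ ∑' ξ, znorm ξ ^ 2 * ‖a ξ‖ ^ 2 := tsum_nonneg fun ξ => by positivity
  have hSDn : (0:ℝ) ≤ ∑' ξ, (∑ j, (ξ j : ℝ) * α j) ^ 2 * ‖a ξ‖ ^ 2 :=
    tsum_nonneg fun ξ => by positivity
  have ha00 : ‖a 0‖ ^ 2 = 0 := by rw [ha0]; simp
  rcases eq_or_lt_of_le hδ with h1 | h1
  · -- δ = 1
    rw [← h1]
    simp only [sub_self, Real.rpow_zero, Real.rpow_one, one_mul, ge_iff_le]
    have key : ∀ ξ : Fin n → ℤ, C ^ 2 * ‖a ξ‖ ^ 2 ≤ (∑ j, (ξ j : ℝ) * α j) ^ 2 * ‖a ξ‖ ^ 2 := by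
      intro ξ
      by_cases hξ : ξ = 0
      · subst hξ; rw [ha00]; simp
      · have hb := hCb ξ hξ
        rw [← h1] at hb
        simp only [sub_self, neg_zero, Real.rpow_zero, mul_one] at hb
        have h2 : C ^ 2 ≤ (∑ j, (ξ j : ℝ) * α j) ^ 2 := by
          rw [← sq_abs (∑ j, (ξ j : ℝ) * α j)]
          exact pow_le_pow_left₀ hC.le hb 2
        exact mul_le_mul_of_nonneg_right h2 (by positivity)
    have hsum : C ^ 2 * ∑' ξ, ‖a ξ‖ ^ 2 ≤ ∑' ξ, (∑ j, (ξ j : ℝ) * α j) ^ 2 * ‖a ξ‖ ^ 2 := by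
      rw [← tsum_mul_left]
      exact Summable.tsum_le_tsum key (ha.L2_summable.mul_left _) (ha.dir_summable α)
    calc C * L2norm a = Real.sqrt (C ^ 2 * ∑' ξ, ‖a ξ‖ ^ 2) := by
          rw [Real.sqrt_mul (by positivity), Real.sqrt_sq hC.le]; rfl
      _ ≤ dirL2norm α a := Real.sqrt_le_sqrt hsum
  · -- δ > 1
    have hδ0 : (0:ℝ) < δ := by linarith
    have key : (∑' ξ, ‖a ξ‖ ^ 2) ≤ (∑' ξ, znorm ξ ^ 2 * ‖a ξ‖ ^ 2) ^ ((δ-1)/δ) *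
        (C⁻¹ ^ 2 * ∑' ξ, (∑ j, (ξ j : ℝ) * α j) ^ 2 * ‖a ξ‖ ^ 2) ^ (1/δ) := by
      have hGsum := ha.grad_summable
      have hDsum := ha.dir_summable α
      set ε := δ - 1 with hε
      have hεpos : 0 < ε := by simp [hε]; linarith
      have hδ0 : (0:ℝ) < δ := by linarith
      set p := δ / ε with hp
      have hpq : Real.HolderConjugate p δ := by
        rw [Real.holderConjugate_iff]; constructor
        · rw [hp, lt_div_iff₀ hεpos, one_mul]; linarith [hε]
        · rw [hp, hε]; field_simp; ring
      have hp0 : p ≠ 0 := hpq.ne_zero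
      have hinvp : 1 / p = ε / δ := by rw [hp]; field_simp
      -- weight function
      set w : (Fin n → ℤ) → ℝ := fun ξ => znorm ξ ^ (-(2 * ε)) with hw
      set F : (Fin n → ℤ) → ℝ := fun ξ => (znorm ξ ^ 2 * ‖a ξ‖ ^ 2) ^ (1/p) with hF
      set G : (Fin n → ℤ) → ℝ := fun ξ => (w ξ * ‖a ξ‖ ^ 2) ^ (1/δ) with hG
      have hFp : ∀ ξ, F ξ ^ p = znorm ξ ^ 2 * ‖a ξ‖ ^ 2 := by
        intro ξ
        rw [hF, ← Real.rpow_mul (by positivity), one_div_mul_cancel hp0, Real.rpow_one]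
      have hwnn : ∀ ξ, 0 ≤ w ξ := fun ξ => Real.rpow_nonneg (znorm_nonneg ξ) _
      have hGq : ∀ ξ, G ξ ^ δ = w ξ * ‖a ξ‖ ^ 2 := by
        intro ξ
        rw [hG, ← Real.rpow_mul (mul_nonneg (hwnn ξ) (by positivity)),
          one_div_mul_cancel hδ0.ne', Real.rpow_one]
      -- pointwise weight bound
      have hW : ∀ ξ, w ξ * ‖a ξ‖ ^ 2 ≤ C⁻¹ ^ 2 * ((∑ j, (ξ j : ℝ) * α j) ^ 2 * ‖a ξ‖ ^ 2) := by
        intro ξ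
        by_cases hξ : ξ = 0
        · subst hξ
          rw [ha0]
          simp
        · have hz := znorm_pos hξ
          have hb := hCb ξ hξ
          have hb' : znorm ξ ^ (-ε) ≤ C⁻¹ * |∑ j, (ξ j : ℝ) * α j| := by
            rw [ge_iff_le, ← le_div_iff₀' hC] at hb
            rw [inv_mul_eq_div]; exact hb
          have hz2 : w ξ = (znorm ξ ^ (-ε)) ^ 2 := by
            rw [hw, ← Real.rpow_natCast (znorm ξ ^ (-ε)) 2, ← Real.rpow_mul (znorm_nonneg ξ)]
            congr 1; push_cast; ring
          have := pow_le_pow_left₀ (Real.rpow_nonneg (znorm_nonneg ξ) _) hb' 2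
          rw [mul_pow, sq_abs] at this
          rw [hz2, show C⁻¹ ^ 2 * ((∑ j, ((ξ j : ℤ) : ℝ) * α j) ^ 2 * ‖a ξ‖ ^ 2)
            = (C⁻¹ ^ 2 * (∑ j, ((ξ j : ℤ) : ℝ) * α j) ^ 2) * ‖a ξ‖ ^ 2 from by ring]
          exact mul_le_mul_of_nonneg_right this (by positivity)
      have hWsum : Summable fun ξ => w ξ * ‖a ξ‖ ^ 2 :=
        Summable.of_nonneg_of_le (fun ξ => mul_nonneg (hwnn ξ) (by positivity)) hW (hDsum.mul_left _)
      -- pointwise Hölder decomposition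
      have hFG : ∀ ξ, ‖a ξ‖ ^ 2 = F ξ * G ξ := by
        intro ξ
        by_cases hξ : ξ = 0
        · subst hξ
          have hz0 : ‖a (0 : Fin n → ℤ)‖ ^ 2 = 0 := by rw [ha0]; simp
          simp only [hF, hG, hz0, mul_zero]
          rw [Real.zero_rpow (one_div_ne_zero hpq.ne_zero),
            Real.zero_rpow (one_div_ne_zero hδ0.ne'), mul_zero]
        · have hz := znorm_pos hξ
          simp only [hF, hG, hw]
          rw [Real.mul_rpow (by positivity) (by positivity),
            Real.mul_rpow (Real.rpow_nonneg (znorm_nonneg ξ) _) (by positivity)]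
          rw [← Real.rpow_natCast (znorm ξ) 2, ← Real.rpow_mul (znorm_nonneg ξ),
            ← Real.rpow_mul (znorm_nonneg ξ)]
          have e2 : 1/p + 1/δ = 1 := by rw [hinvp, hε]; field_simp; ring
          rw [mul_mul_mul_comm, ← Real.rpow_add hz,
            ← Real.rpow_add' (by positivity) (by rw [e2]; norm_num)]
          have e1 : ((2:ℕ):ℝ) * (1/p) + -(2*ε) * (1/δ) = 0 := by
            rw [hinvp, hε]; push_cast; field_simp; ring
          rw [e1, e2, Real.rpow_zero, Real.rpow_one, one_mul]
      -- Hölder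
      have holder := Real.summable_and_inner_le_Lp_mul_Lq_tsum_of_nonneg hpq
        (f := F) (g := G) (fun ξ => Real.rpow_nonneg (by positivity) _)
        (fun ξ => Real.rpow_nonneg (mul_nonneg (hwnn ξ) (by positivity)) _)
        (by simpa only [hFp] using hGsum) (by simpa only [hGq] using hWsum)
      obtain ⟨-, hH⟩ := holder
      simp only [hFp, hGq] at hH
      have hstep : ∑' ξ, ‖a ξ‖ ^ 2 ≤
          (∑' ξ, znorm ξ ^ 2 * ‖a ξ‖ ^ 2) ^ (1/p) * (∑' ξ, w ξ * ‖a ξ‖ ^ 2) ^ (1/δ) := by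
        calc ∑' ξ, ‖a ξ‖ ^ 2 = ∑' ξ, F ξ * G ξ := tsum_congr hFG
          _ ≤ _ := hH
      have hWle : ∑' ξ, w ξ * ‖a ξ‖ ^ 2 ≤ C⁻¹ ^ 2 * ∑' ξ, (∑ j, (ξ j : ℝ) * α j) ^ 2 * ‖a ξ‖ ^ 2 := by
        rw [← tsum_mul_left]
        exact Summable.tsum_le_tsum hW hWsum (hDsum.mul_left _)
      calc ∑' ξ, ‖a ξ‖ ^ 2 ≤ _ := hstep
        _ ≤ (∑' ξ, znorm ξ ^ 2 * ‖a ξ‖ ^ 2) ^ ((δ-1)/δ) *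
          (C⁻¹ ^ 2 * ∑' ξ, (∑ j, (ξ j : ℝ) * α j) ^ 2 * ‖a ξ‖ ^ 2) ^ (1/δ) := by
            rw [hinvp, ← hε]
            gcongr
            · exact tsum_nonneg fun ξ => mul_nonneg (hwnn ξ) (by positivity)
    -- final algebra
    rw [ge_iff_le]
    set S0 := ∑' ξ, ‖a ξ‖ ^ 2
    set SG := ∑' ξ, znorm ξ ^ 2 * ‖a ξ‖ ^ 2
    set SD := ∑' ξ, (∑ j, (ξ j : ℝ) * α j) ^ 2 * ‖a ξ‖ ^ 2
    have eL : L2norm a ^ δ = S0 ^ (1/2 * δ) := by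
      rw [L2norm, Real.sqrt_eq_rpow, ← Real.rpow_mul hS0n]
    have eG : gradL2norm a ^ (δ - 1) = SG ^ (1/2 * (δ - 1)) := by
      rw [gradL2norm, Real.sqrt_eq_rpow, ← Real.rpow_mul hSGn]
    have eD : dirL2norm α a = SD ^ ((1:ℝ)/2) := by
      rw [dirL2norm, Real.sqrt_eq_rpow]
    rw [eL, eG, eD]
    have hrnn : (0:ℝ) ≤ C⁻¹ ^ 2 * SD := mul_nonneg (by positivity) hSDn
    calc C * S0 ^ (1/2 * δ)
        ≤ C * (SG ^ ((δ-1)/δ) * (C⁻¹ ^ 2 * SD) ^ (1/δ)) ^ (1/2 * δ) := by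
          gcongr
      _ = C * (SG ^ (1/2 * (δ - 1)) * (C⁻¹ * SD ^ ((1:ℝ)/2))) := by
          rw [Real.mul_rpow (Real.rpow_nonneg hSGn _) (Real.rpow_nonneg hrnn _),
            ← Real.rpow_mul hSGn, ← Real.rpow_mul hrnn,
            show (δ-1)/δ * (1/2 * δ) = 1/2 * (δ - 1) from by field_simp,
            show 1/δ * (1/2 * δ) = (1:ℝ)/2 from by field_simp,
            show (C⁻¹ ^ 2 * SD) ^ ((1:ℝ)/2) = C⁻¹ * SD ^ ((1:ℝ)/2) from by
              rw [Real.mul_rpow (by positivity) hSDn, ← Real.sqrt_eq_rpow,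
                Real.sqrt_sq (by positivity)]]
      _ = SG ^ (1/2 * (δ - 1)) * SD ^ ((1:ℝ)/2) := by
          rw [show C * (SG ^ (1/2 * (δ - 1)) * (C⁻¹ * SD ^ ((1:ℝ)/2)))
            = (C * C⁻¹) * (SG ^ (1/2 * (δ - 1)) * SD ^ ((1:ℝ)/2)) from by ring,
            mul_inv_cancel₀ hC.ne', one_mul]
end

section
/- Let α ∈ ℝⁿ and δ ≥ 1. Suppose that for every C > 0 there exists a nonzero ξ ∈ ℤⁿ with 0 < |⟨ξ,α⟩| < C|ξ|^{-(δ-1)}. Then there is no constant c > 0 such that ‖∇f‖_{L²(𝕋ⁿ)}^{δ-1}·‖⟨∇f,α⟩‖_{L²(𝕋ⁿ)} ≥ c‖f‖_{L²(𝕋ⁿ)}^δ holds for all f ∈ H¹(𝕋ⁿ) with mean value zero. -/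
theorem stmt5 {n : ℕ} (α : Fin n → ℝ) (δ : ℝ) (hδ : 1 ≤ δ)
    (h : ∀ C > (0 : ℝ), ∃ ξ : Fin n → ℤ, ξ ≠ 0 ∧
      0 < |∑ j, (ξ j : ℝ) * α j| ∧
      |∑ j, (ξ j : ℝ) * α j| < C * znorm ξ ^ (-(δ - 1))) :
    ¬ ∃ c > 0, ∀ a : (Fin n → ℤ) → ℂ, memH1 a → a 0 = 0 →
      gradL2norm a ^ (δ - 1) * dirL2norm α a ≥ c * L2norm a ^ δ := by
  rintro ⟨c, hc, hall⟩
  obtain ⟨ξ, hξ0, hS0, hSlt⟩ := h c hc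
  set S := ∑ j, (ξ j : ℝ) * α j with hS
  set a : (Fin n → ℤ) → ℂ := fun η => if η = ξ then 1 else 0 with ha
  have haξ : a ξ = 1 := if_pos rfl
  have haz : ∀ η, η ≠ ξ → a η = 0 := fun η hη => if_neg hη
  have hznorm : 0 < znorm ξ := by
    have hne : ∃ j, ξ j ≠ 0 := by
      by_contra hcon
      push_neg at hcon
      exact hξ0 (funext fun j => hcon j)
    obtain ⟨j, hj⟩ := hne
    have hsum : 0 < ∑ j, ((ξ j : ℝ)) ^ 2 := by
      apply Finset.sum_pos' (fun i _ => sq_nonneg _)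
      refine ⟨j, Finset.mem_univ j, ?_⟩
      have : ((ξ j : ℝ)) ≠ 0 := by exact_mod_cast hj
      positivity
    exact Real.sqrt_pos.mpr hsum
  -- norms of a
  have hL2 : L2norm a = 1 := by
    unfold L2norm
    rw [tsum_eq_single ξ (fun η hη => by rw [haz η hη]; simp)]
    rw [haξ]; simp
  have hgrad : gradL2norm a = znorm ξ := by
    unfold gradL2norm
    rw [tsum_eq_single ξ (fun η hη => by rw [haz η hη]; simp)]
    rw [haξ]; simp [Real.sqrt_sq hznorm.le]
  have hdir : dirL2norm α a = |S| := by
    unfold dirL2norm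
    rw [tsum_eq_single ξ (fun η hη => by rw [haz η hη]; simp)]
    rw [haξ]; simp [Real.sqrt_sq_eq_abs, hS]
  have hmem : memH1 a := by
    apply summable_of_ne_finset_zero (s := {ξ})
    intro η hη
    rw [haz η (by simpa using hη)]
    simp
  have ha0 : a 0 = 0 := haz 0 (fun h0 => hξ0 h0.symm)
  have hge := hall a hmem ha0
  rw [hL2, hgrad, hdir, Real.one_rpow, mul_one] at hge
  have hp : (0:ℝ) < znorm ξ ^ (δ - 1) := Real.rpow_pos_of_pos hznorm _
  have key : znorm ξ ^ (δ - 1) * |S| < c := by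
    calc znorm ξ ^ (δ - 1) * |S|
        < znorm ξ ^ (δ - 1) * (c * znorm ξ ^ (-(δ - 1))) :=
          mul_lt_mul_of_pos_left hSlt hp
      _ = c * (znorm ξ ^ (δ - 1) * znorm ξ ^ (-(δ - 1))) := by ring
      _ = c := by rw [← Real.rpow_add hznorm]; simp
  linarith
end

section
/- Let α = (α₁, α₂) ∈ ℝ² with α₁α₂ ≠ 0, and suppose α₂/α₁ is an irrational number with finite irrationality measure μ. Then for every δ > μ there exists c > 0 such that ‖∇f‖_{L²(𝕋²)}^{δ-1}·‖α₁∂_x f + α₂∂_y f‖_{L²(𝕋²)} ≥ c‖f‖_{L²(𝕋²)}^δ for all f ∈ H¹(𝕋²) with mean value zero. -/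
/-- Euclidean norm of a frequency `ξ ∈ ℤ²`. -/
noncomputable def znorm2 (ξ : ℤ × ℤ) : ℝ :=
  Real.sqrt ((ξ.1 : ℝ) ^ 2 + (ξ.2 : ℝ) ^ 2)

/-- `L²(𝕋²)` norm of `f` in terms of its Fourier coefficients (Plancherel). -/
noncomputable def L2norm2 (a : ℤ × ℤ → ℂ) : ℝ :=
  Real.sqrt (∑' ξ, ‖a ξ‖ ^ 2)

/-- `L²(𝕋²)` norm of `∇f` in terms of the Fourier coefficients of `f`. -/
noncomputable def gradL2norm2 (a : ℤ × ℤ → ℂ) : ℝ :=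
  Real.sqrt (∑' ξ, znorm2 ξ ^ 2 * ‖a ξ‖ ^ 2)

/-- `L²(𝕋²)` norm of `α₁ ∂ₓ f + α₂ ∂_y f` in terms of the Fourier
coefficients of `f`. -/
noncomputable def dirL2norm2 (α₁ α₂ : ℝ) (a : ℤ × ℤ → ℂ) : ℝ :=
  Real.sqrt (∑' ξ, (α₁ * (ξ.1 : ℝ) + α₂ * (ξ.2 : ℝ)) ^ 2 * ‖a ξ‖ ^ 2)

/-- Membership in `H¹(𝕋²)`, via Fourier coefficients. -/
def memH12 (a : ℤ × ℤ → ℂ) : Prop :=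
  Summable fun ξ => (1 + znorm2 ξ ^ 2) * ‖a ξ‖ ^ 2

private lemma young_aux {δ C u v lam : ℝ} (hδ : 1 < δ) (hC : 0 < C) (hu : 0 ≤ u) (hv : 0 ≤ v)
    (hlam : 0 < lam) (h : C ^ 2 ≤ u * v ^ (δ - 1)) :
    C ^ (2 / δ) ≤ (1 / δ) * (lam ^ (δ - 1) * u) + (1 - 1 / δ) * (lam⁻¹ * v) := by
  have hδ0 : (0:ℝ) < δ := by linarith
  have hw : (1/δ) + (1 - 1/δ) = 1 := by ring
  have hgeo := Real.geom_mean_le_arith_mean2_weighted (w₁ := 1/δ) (w₂ := 1 - 1/δ)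
    (p₁ := lam ^ (δ - 1) * u) (p₂ := lam⁻¹ * v) (by positivity)
    (by rw [sub_nonneg, div_le_one hδ0]; linarith) (by positivity) (by positivity) hw
  refine le_trans ?_ hgeo
  have hlv : (0:ℝ) ≤ lam ^ (δ-1) := (Real.rpow_pos_of_pos hlam _).le
  have e1 : (lam ^ (δ-1) * u) ^ (1/δ) = lam ^ ((δ-1)/δ) * u ^ (1/δ) := by
    rw [Real.mul_rpow hlv hu, ← Real.rpow_mul hlam.le]
    ring_nf
  have e2 : (lam⁻¹ * v) ^ (1 - 1/δ) = lam ^ (-(1 - 1/δ)) * v ^ (1 - 1/δ) := by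
    rw [Real.mul_rpow (by positivity) hv, ← Real.rpow_neg_one lam,
      ← Real.rpow_mul hlam.le]
    ring_nf
  rw [e1, e2]
  have e3 : lam ^ ((δ-1)/δ) * u ^ (1/δ) * (lam ^ (-(1 - 1/δ)) * v ^ (1 - 1/δ))
      = (lam ^ ((δ-1)/δ) * lam ^ (-(1 - 1/δ))) * (u ^ (1/δ) * v ^ (1 - 1/δ)) := by ring
  rw [e3, ← Real.rpow_add hlam, show (δ-1)/δ + -(1 - 1/δ) = 0 by field_simp; ring,
    Real.rpow_zero, one_mul]
  have e4 : u ^ (1/δ) * v ^ (1 - 1/δ) = (u * v ^ (δ-1)) ^ (1/δ) := by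
    rw [Real.mul_rpow hu (by positivity), ← Real.rpow_mul hv]
    congr 1
    field_simp
  rw [e4]
  have e5 : C ^ (2/δ) = (C ^ 2) ^ (1/δ) := by
    rw [← Real.rpow_natCast C 2, ← Real.rpow_mul hC.le]
    norm_num [div_eq_mul_inv]
  rw [e5]
  exact Real.rpow_le_rpow (by positivity) h (by positivity)

private lemma lam_calc {δ A B : ℝ} (hδ : 1 < δ) (hA : 0 < A) (hB : 0 < B) :
    (1/δ) * (((B/A) ^ (1/δ)) ^ (δ-1) * A) + (1 - 1/δ) * (((B/A) ^ (1/δ))⁻¹ * B)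
      = A ^ (1/δ) * B ^ ((δ-1)/δ) := by
  have hδ0 : (0:ℝ) < δ := by linarith
  have hBA : (0:ℝ) < B/A := div_pos hB hA
  have e1 : ((B/A) ^ (1/δ)) ^ (δ-1) = B ^ ((δ-1)/δ) / A ^ ((δ-1)/δ) := by
    rw [← Real.rpow_mul hBA.le, show 1/δ * (δ-1) = (δ-1)/δ by ring,
      Real.div_rpow hB.le hA.le]
  have e2 : ((B/A) ^ (1/δ))⁻¹ = A ^ (1/δ) / B ^ (1/δ) := by
    rw [Real.div_rpow hB.le hA.le, inv_div]
  have hA1 : A ^ ((δ-1)/δ) * A ^ (1/δ) = A := by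
    rw [← Real.rpow_add hA, show (δ-1)/δ + 1/δ = 1 by field_simp; ring, Real.rpow_one]
  have hB1 : B ^ ((δ-1)/δ) * B ^ (1/δ) = B := by
    rw [← Real.rpow_add hB, show (δ-1)/δ + 1/δ = 1 by field_simp; ring, Real.rpow_one]
  have hAe : A ^ ((δ-1)/δ) ≠ 0 := (Real.rpow_pos_of_pos hA _).ne'
  have hBe : B ^ (1/δ) ≠ 0 := (Real.rpow_pos_of_pos hB _).ne'
  rw [e1, e2]
  field_simp
  linear_combination (-(B ^ ((δ-1)/δ) * B ^ (1/δ))) * hA1 +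
    (-((δ-1) * A ^ ((δ-1)/δ) * A ^ (1/δ))) * hB1

private lemma znorm2_one_le {ξ : ℤ × ℤ} (hξ : ξ ≠ 0) : 1 ≤ znorm2 ξ := by
  have h : ξ.1 ≠ 0 ∨ ξ.2 ≠ 0 := by
    by_contra h; push_neg at h; exact hξ (Prod.ext h.1 h.2)
  have h1 : (1:ℤ) ≤ ξ.1 ^ 2 + ξ.2 ^ 2 := by
    rcases h with h | h
    · nlinarith [Int.one_le_abs h, sq_abs ξ.1, sq_nonneg ξ.2]
    · nlinarith [Int.one_le_abs h, sq_abs ξ.2, sq_nonneg ξ.1]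
  have h2 : (1:ℝ) ≤ (ξ.1:ℝ) ^ 2 + (ξ.2:ℝ) ^ 2 := by exact_mod_cast h1
  calc (1:ℝ) = Real.sqrt 1 := Real.sqrt_one.symm
    _ ≤ znorm2 ξ := Real.sqrt_le_sqrt h2

private lemma abs_snd_le (ξ : ℤ × ℤ) : |(ξ.2:ℝ)| ≤ znorm2 ξ := by
  rw [← Real.sqrt_sq_eq_abs]
  exact Real.sqrt_le_sqrt (by nlinarith [sq_nonneg ((ξ.1:ℝ))])

private lemma dioph_key {α₁ α₂ μ δ : ℝ} (hα₁ : α₁ ≠ 0) (hirr : Irrational (α₂ / α₁))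
    (hμ : ∀ ν > μ, ∃ Q : ℕ, 0 < Q ∧ ∀ p q : ℤ, q ≠ 0 → (Q : ℝ) ≤ |(q : ℝ)| →
      |α₂ / α₁ - (p : ℝ) / (q : ℝ)| ≥ |(q : ℝ)| ^ (-ν))
    (hδμ : μ < δ) (hδ1 : 1 < δ) :
    ∃ C > 0, ∀ ξ : ℤ × ℤ, ξ ≠ 0 → C * znorm2 ξ ^ (1 - δ) ≤ |α₁ * ξ.1 + α₂ * ξ.2| := by
  set β := α₂ / α₁ with hβ
  set ν := (max μ 1 + δ) / 2 with hν
  have hmax : max μ 1 < δ := max_lt hδμ hδ1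
  have hνμ : μ < ν := by
    have := le_max_left μ 1; rw [hν]; linarith
  have hν1 : 1 ≤ ν := by
    have := le_max_right μ 1; rw [hν]; linarith
  have hνδ : ν ≤ δ := by rw [hν]; linarith
  obtain ⟨Q, hQpos, hQ⟩ := hμ ν hνμ
  set T : Finset ℤ := (Finset.Icc (-(Q:ℤ)) Q).erase 0 with hT
  have hTne : T.Nonempty := ⟨1, by
    simp only [hT, Finset.mem_erase, Finset.mem_Icc]
    refine ⟨one_ne_zero, ?_, ?_⟩ <;> omega⟩
  set ε := T.inf' hTne (fun q => |β * q - round (β * q)|) with hε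
  have hεpos : 0 < ε := by
    rw [hε, Finset.lt_inf'_iff]
    intro q hq
    have hq0 : q ≠ 0 := by
      simp only [hT, Finset.mem_erase] at hq; exact hq.1
    have hir : Irrational (β * q) := hirr.mul_intCast hq0
    exact abs_pos.mpr (sub_ne_zero.mpr (hir.ne_int _))
  refine ⟨|α₁| * min ε 1, by positivity, ?_⟩
  intro ξ hξ
  have hN1 : 1 ≤ znorm2 ξ := znorm2_one_le hξ
  have hN0 : (0:ℝ) < znorm2 ξ := lt_of_lt_of_le one_pos hN1
  have hNpow : znorm2 ξ ^ (1-δ) ≤ 1 :=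
    Real.rpow_le_one_of_one_le_of_nonpos hN1 (by linarith)
  have hNpow0 : 0 < znorm2 ξ ^ (1-δ) := Real.rpow_pos_of_pos hN0 _
  have hmin1 : min ε 1 ≤ 1 := min_le_right _ _
  have hminpos : 0 < min ε 1 := lt_min hεpos one_pos
  have key2 : min ε 1 * znorm2 ξ ^ (1 - δ) ≤ |(ξ.1 : ℝ) + β * ξ.2| := by
    rcases eq_or_ne ξ.2 0 with h2 | h2
    · have h1 : ξ.1 ≠ 0 := by
        intro h; exact hξ (Prod.ext h h2)
      have habs : (1:ℝ) ≤ |(ξ.1:ℝ)| := by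
        have := Int.one_le_abs h1
        exact_mod_cast this
      calc min ε 1 * znorm2 ξ ^ (1-δ) ≤ 1 * 1 :=
            mul_le_mul hmin1 hNpow hNpow0.le zero_le_one
        _ ≤ |(ξ.1:ℝ)| := by rw [one_mul]; exact habs
        _ = |(ξ.1:ℝ) + β * ξ.2| := by rw [h2]; norm_num
    · have hq0 : (0:ℝ) < |(ξ.2:ℝ)| := by
        rw [abs_pos]; exact_mod_cast h2
      rcases le_or_gt (Q:ℝ) |(ξ.2:ℝ)| with hbig | hsmall
      · have hdio := hQ (-ξ.1) ξ.2 h2 hbig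
        have heq : |(ξ.1:ℝ) + β * ξ.2| = |(ξ.2:ℝ)| * |β - ((-ξ.1 : ℤ):ℝ)/(ξ.2:ℝ)| := by
          rw [← abs_mul]
          congr 1
          have hne : ((ξ.2:ℝ)) ≠ 0 := by exact_mod_cast h2
          push_cast
          field_simp
          ring
        calc min ε 1 * znorm2 ξ ^ (1-δ)
            ≤ 1 * znorm2 ξ ^ (1-δ) := mul_le_mul_of_nonneg_right hmin1 hNpow0.le
          _ = znorm2 ξ ^ (1-δ) := one_mul _
          _ ≤ znorm2 ξ ^ (1-ν) := Real.rpow_le_rpow_of_exponent_le hN1 (by linarith)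
          _ ≤ |(ξ.2:ℝ)| ^ (1-ν) :=
              Real.rpow_le_rpow_of_nonpos hq0 (abs_snd_le ξ) (by linarith)
          _ = |(ξ.2:ℝ)| * |(ξ.2:ℝ)| ^ (-ν) := by
              rw [show (1-ν) = 1 + (-ν) by ring, Real.rpow_add hq0, Real.rpow_one]
          _ ≤ |(ξ.2:ℝ)| * |β - ((-ξ.1 : ℤ):ℝ)/(ξ.2:ℝ)| :=
              mul_le_mul_of_nonneg_left hdio hq0.le
          _ = |(ξ.1:ℝ) + β * ξ.2| := heq.symm
      · have hmem : ξ.2 ∈ T := by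
          simp only [hT, Finset.mem_erase, Finset.mem_Icc]
          have hlt : |ξ.2| < (Q:ℤ) := by
            have h' : |(ξ.2:ℝ)| < (Q:ℝ) := hsmall
            exact_mod_cast (by exact h' : (|ξ.2|:ℝ) < (Q:ℝ))
          have habs := abs_lt.mp hlt
          exact ⟨h2, habs.1.le, habs.2.le⟩
        have hd : ε ≤ |β * ξ.2 - round (β * (ξ.2:ℝ))| := Finset.inf'_le _ hmem
        have hr : |β * ξ.2 - round (β * (ξ.2:ℝ))| ≤ |(ξ.1:ℝ) + β * ξ.2| := by
          have h := round_le (β * (ξ.2:ℝ)) (-ξ.1)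
          have heq2 : |β * (ξ.2:ℝ) - ((-ξ.1 : ℤ):ℝ)| = |(ξ.1:ℝ) + β * ξ.2| := by
            push_cast; ring_nf
          rwa [heq2] at h
        calc min ε 1 * znorm2 ξ ^ (1-δ) ≤ ε * 1 :=
              mul_le_mul (min_le_left _ _) hNpow hNpow0.le hεpos.le
          _ = ε := mul_one _
          _ ≤ |(ξ.1:ℝ) + β * ξ.2| := le_trans hd hr
  have hfin : |α₁| * |(ξ.1:ℝ) + β * ξ.2| = |α₁ * ξ.1 + α₂ * ξ.2| := by
    rw [← abs_mul]
    congr 1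
    rw [hβ]
    field_simp
  calc |α₁| * min ε 1 * znorm2 ξ ^ (1-δ)
      = |α₁| * (min ε 1 * znorm2 ξ ^ (1-δ)) := by ring
    _ ≤ |α₁| * |(ξ.1:ℝ) + β * ξ.2| := mul_le_mul_of_nonneg_left key2 (abs_nonneg _)
    _ = |α₁ * ξ.1 + α₂ * ξ.2| := hfin

/-- If `α₂/α₁` is irrational with finite irrationality measure `μ`, then the
directional Poincaré inequality on `𝕋²` in direction `α` holds for every
exponent `δ > μ`. -/
theorem stmt9 (α₁ α₂ : ℝ) (hα : α₁ * α₂ ≠ 0) (hirr : Irrational (α₂ / α₁))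
    (μ : ℝ)
    (hμ : ∀ ν > μ, ∃ Q : ℕ, 0 < Q ∧ ∀ p q : ℤ, q ≠ 0 → (Q : ℝ) ≤ |(q : ℝ)| →
      |α₂ / α₁ - (p : ℝ) / (q : ℝ)| ≥ |(q : ℝ)| ^ (-ν)) :
    ∀ δ > μ, ∃ c > 0, ∀ a : ℤ × ℤ → ℂ, memH12 a → a 0 = 0 →
      gradL2norm2 a ^ (δ - 1) * dirL2norm2 α₁ α₂ a ≥ c * L2norm2 a ^ δ := by
  intro δ hδμ
  have hα₁ : α₁ ≠ 0 := left_ne_zero_of_mul hα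
  rcases le_or_gt δ 1 with hδ1 | hδ1
  · -- δ ≤ 1 contradicts the Diophantine hypothesis
    exfalso
    set β := α₂ / α₁ with hβ
    set ν := (μ + δ) / 2 with hν
    have hνμ : μ < ν := by rw [hν]; linarith
    have hνδ : ν < δ := by rw [hν]; linarith
    obtain ⟨Q, hQpos, hQ⟩ := hμ ν hνμ
    have hQ1 : (1:ℝ) ≤ (Q:ℝ) := by exact_mod_cast hQpos
    have hQR : (0:ℝ) < (Q:ℝ) := by linarith
    have habsQ : |((Q:ℤ):ℝ)| = (Q:ℝ) := by
      rw [abs_of_pos]; · push_cast; ring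
      · push_cast; linarith
    have hq0 : ((Q:ℤ)) ≠ 0 := by exact_mod_cast hQpos.ne'
    have h1 := hQ (round (β * Q)) (Q:ℤ) hq0 (by rw [habsQ])
    rw [habsQ] at h1
    have h2 : |β - (round (β * (Q:ℝ)) : ℝ) / (Q:ℝ)| ≤ (1/2) / Q := by
      have h := abs_sub_round (β * (Q:ℝ))
      have heq : β - (round (β * (Q:ℝ)) : ℝ) / (Q:ℝ)
          = (β * Q - (round (β * (Q:ℝ)) : ℝ)) / Q := by field_simp
      rw [heq, abs_div, abs_of_pos hQR]
      gcongr
    push_cast at h1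
    have hQinv : (Q:ℝ)⁻¹ ≤ (Q:ℝ) ^ (-ν) := by
      rw [← Real.rpow_neg_one]
      exact Real.rpow_le_rpow_of_exponent_le hQ1 (by linarith)
    have hcontra : (1:ℝ)/Q ≤ (1/2)/Q := by
      rw [one_div]
      exact le_trans (le_trans hQinv h1) h2
    have := (div_le_div_iff₀ hQR hQR).mp hcontra
    linarith
  · obtain ⟨C, hCpos, hC⟩ := dioph_key hα₁ hirr hμ hδμ hδ1
    have hδ0 : (0:ℝ) < δ := by linarith
    refine ⟨C, hCpos, ?_⟩
    intro a ha ha0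
    simp only [ge_iff_le, gradL2norm2, dirL2norm2, L2norm2, memH12] at *
    set S := ∑' ξ, ‖a ξ‖ ^ 2 with hSdef
    set B := ∑' ξ, znorm2 ξ ^ 2 * ‖a ξ‖ ^ 2 with hBdef
    set A := ∑' ξ, (α₁ * (ξ.1:ℝ) + α₂ * (ξ.2:ℝ)) ^ 2 * ‖a ξ‖ ^ 2 with hAdef
    have hzsq : ∀ ξ : ℤ × ℤ, znorm2 ξ ^ 2 = (ξ.1:ℝ) ^ 2 + (ξ.2:ℝ) ^ 2 := fun ξ =>
      Real.sq_sqrt (by positivity)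
    have hS_sum : Summable fun ξ : ℤ × ℤ => ‖a ξ‖ ^ 2 :=
      Summable.of_nonneg_of_le (fun ξ => sq_nonneg _)
        (fun ξ => by nlinarith [sq_nonneg (znorm2 ξ), sq_nonneg ‖a ξ‖]) ha
    have hB_sum : Summable fun ξ : ℤ × ℤ => znorm2 ξ ^ 2 * ‖a ξ‖ ^ 2 :=
      Summable.of_nonneg_of_le (fun ξ => by positivity)
        (fun ξ => by nlinarith [sq_nonneg (znorm2 ξ), sq_nonneg ‖a ξ‖]) ha
    have hA_sum : Summable fun ξ : ℤ × ℤ => (α₁ * (ξ.1:ℝ) + α₂ * (ξ.2:ℝ)) ^ 2 * ‖a ξ‖ ^ 2 := by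
      refine Summable.of_nonneg_of_le (fun ξ => by positivity)
        (fun ξ => ?_) (hB_sum.mul_left (α₁ ^ 2 + α₂ ^ 2))
      have h1 : (α₁ * (ξ.1:ℝ) + α₂ * (ξ.2:ℝ)) ^ 2 ≤ (α₁ ^ 2 + α₂ ^ 2) * (znorm2 ξ ^ 2) := by
        rw [hzsq ξ]
        nlinarith [sq_nonneg (α₁ * (ξ.2:ℝ) - α₂ * (ξ.1:ℝ))]
      calc (α₁ * (ξ.1:ℝ) + α₂ * (ξ.2:ℝ)) ^ 2 * ‖a ξ‖ ^ 2
          ≤ (α₁ ^ 2 + α₂ ^ 2) * (znorm2 ξ ^ 2) * ‖a ξ‖ ^ 2 :=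
            mul_le_mul_of_nonneg_right h1 (sq_nonneg _)
        _ = (α₁ ^ 2 + α₂ ^ 2) * (znorm2 ξ ^ 2 * ‖a ξ‖ ^ 2) := by ring
    have hSnn : 0 ≤ S := tsum_nonneg fun ξ => sq_nonneg _
    have hBnn : 0 ≤ B := tsum_nonneg fun ξ => by positivity
    have hAnn : 0 ≤ A := tsum_nonneg fun ξ => by positivity
    by_cases hz : ∀ ξ, a ξ = 0
    · have hS : S = 0 := by
        rw [hSdef]
        convert tsum_zero with ξ
        rw [hz ξ]; simp
      rw [hS, Real.sqrt_zero, Real.zero_rpow hδ0.ne', mul_zero]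
      positivity
    · push_neg at hz
      obtain ⟨ξ₀, hξ₀⟩ := hz
      have hξ₀0 : ξ₀ ≠ 0 := fun h => hξ₀ (h ▸ ha0)
      have ha₀pos : 0 < ‖a ξ₀‖ ^ 2 := pow_pos (norm_pos_iff.mpr hξ₀) 2
      have hSpos : 0 < S := Summable.tsum_pos hS_sum (fun ξ => sq_nonneg _) ξ₀ ha₀pos
      have hzpos : 0 < znorm2 ξ₀ := lt_of_lt_of_le one_pos (znorm2_one_le hξ₀0)
      have hBpos : 0 < B := Summable.tsum_pos hB_sum (fun ξ => by positivity) ξ₀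
        (mul_pos (pow_pos hzpos 2) ha₀pos)
      have hαpos : 0 < |α₁ * (ξ₀.1:ℝ) + α₂ * (ξ₀.2:ℝ)| :=
        lt_of_lt_of_le (mul_pos hCpos (Real.rpow_pos_of_pos hzpos _)) (hC ξ₀ hξ₀0)
      have hApos : 0 < A := by
        refine Summable.tsum_pos hA_sum (fun ξ => by positivity) ξ₀ ?_
        have : 0 < (α₁ * (ξ₀.1:ℝ) + α₂ * (ξ₀.2:ℝ)) ^ 2 := by
          have := sq_abs (α₁ * (ξ₀.1:ℝ) + α₂ * (ξ₀.2:ℝ))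
          nlinarith
        positivity
      set lam := (B / A) ^ (1/δ) with hlamdef
      have hlam : 0 < lam := Real.rpow_pos_of_pos (div_pos hBpos hApos) _
      have pointwise : ∀ ξ : ℤ × ℤ, C ^ (2/δ) * ‖a ξ‖ ^ 2 ≤
          (1/δ) * (lam ^ (δ-1) * ((α₁ * (ξ.1:ℝ) + α₂ * (ξ.2:ℝ)) ^ 2 * ‖a ξ‖ ^ 2))
          + (1 - 1/δ) * (lam⁻¹ * (znorm2 ξ ^ 2 * ‖a ξ‖ ^ 2)) := by
        intro ξ
        rcases eq_or_ne (a ξ) 0 with h | h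
        · simp [h]
        · have hξ0 : ξ ≠ 0 := fun hh => h (hh ▸ ha0)
          have hkey := hC ξ hξ0
          have hNpos : 0 < znorm2 ξ := lt_of_lt_of_le one_pos (znorm2_one_le hξ0)
          have hCle : C ≤ |α₁ * (ξ.1:ℝ) + α₂ * (ξ.2:ℝ)| * znorm2 ξ ^ (δ-1) := by
            have hmul := mul_le_mul_of_nonneg_right hkey
              (Real.rpow_pos_of_pos hNpos (δ-1)).le
            rw [mul_assoc, ← Real.rpow_add hNpos] at hmul
            simpa using hmul
          have hCsq : C ^ 2 ≤ (α₁ * (ξ.1:ℝ) + α₂ * (ξ.2:ℝ)) ^ 2 * (znorm2 ξ ^ 2) ^ (δ-1) := by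
            have hsq := mul_self_le_mul_self hCpos.le hCle
            have e1 : (znorm2 ξ ^ 2 : ℝ) ^ (δ-1) = (znorm2 ξ ^ (δ-1)) ^ 2 := by
              rw [← Real.rpow_natCast (znorm2 ξ ^ (δ-1)) 2, ← Real.rpow_mul hNpos.le,
                ← Real.rpow_natCast (znorm2 ξ) 2, ← Real.rpow_mul hNpos.le]
              norm_num
              ring_nf
            rw [e1]
            calc C ^ 2 = C * C := sq C
              _ ≤ (|α₁ * (ξ.1:ℝ) + α₂ * (ξ.2:ℝ)| * znorm2 ξ ^ (δ-1)) *
                  (|α₁ * (ξ.1:ℝ) + α₂ * (ξ.2:ℝ)| * znorm2 ξ ^ (δ-1)) := hsq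
              _ = (α₁ * (ξ.1:ℝ) + α₂ * (ξ.2:ℝ)) ^ 2 * (znorm2 ξ ^ (δ-1)) ^ 2 := by
                  rw [← sq_abs]; ring
          have hya := young_aux hδ1 hCpos (sq_nonneg _) (sq_nonneg (znorm2 ξ)) hlam hCsq
          calc C ^ (2/δ) * ‖a ξ‖ ^ 2
              ≤ ((1/δ) * (lam ^ (δ-1) * (α₁ * (ξ.1:ℝ) + α₂ * (ξ.2:ℝ)) ^ 2)
                + (1 - 1/δ) * (lam⁻¹ * znorm2 ξ ^ 2)) * ‖a ξ‖ ^ 2 :=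
                mul_le_mul_of_nonneg_right hya (sq_nonneg _)
            _ = (1/δ) * (lam ^ (δ-1) * ((α₁ * (ξ.1:ℝ) + α₂ * (ξ.2:ℝ)) ^ 2 * ‖a ξ‖ ^ 2))
                + (1 - 1/δ) * (lam⁻¹ * (znorm2 ξ ^ 2 * ‖a ξ‖ ^ 2)) := by ring
      have hlhs_sum : Summable fun ξ : ℤ × ℤ => C ^ (2/δ) * ‖a ξ‖ ^ 2 :=
        hS_sum.mul_left _
      have hrhs1 : Summable fun ξ : ℤ × ℤ =>
          (1/δ) * (lam ^ (δ-1) * ((α₁ * (ξ.1:ℝ) + α₂ * (ξ.2:ℝ)) ^ 2 * ‖a ξ‖ ^ 2)) :=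
        (hA_sum.mul_left _).mul_left _
      have hrhs2 : Summable fun ξ : ℤ × ℤ =>
          (1 - 1/δ) * (lam⁻¹ * (znorm2 ξ ^ 2 * ‖a ξ‖ ^ 2)) :=
        (hB_sum.mul_left _).mul_left _
      have hmain := Summable.tsum_le_tsum pointwise hlhs_sum (hrhs1.add hrhs2)
      rw [tsum_mul_left, Summable.tsum_add hrhs1 hrhs2, tsum_mul_left, tsum_mul_left,
        tsum_mul_left, tsum_mul_left] at hmain
      have hmain2 : C ^ (2/δ) * S ≤ A ^ (1/δ) * B ^ ((δ-1)/δ) := by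
        rw [← lam_calc hδ1 hApos hBpos]
        exact hmain
      have hpow := Real.rpow_le_rpow (by positivity) hmain2 hδ0.le
      have eL : (C ^ (2/δ) * S) ^ δ = C ^ 2 * S ^ δ := by
        rw [Real.mul_rpow (by positivity) hSnn, ← Real.rpow_mul hCpos.le]
        congr 1
        rw [show 2/δ * δ = 2 by field_simp, ← Real.rpow_natCast C 2]
        norm_num
      have eR : (A ^ (1/δ) * B ^ ((δ-1)/δ)) ^ δ = A * B ^ (δ-1) := by
        rw [Real.mul_rpow (by positivity) (by positivity), ← Real.rpow_mul hAnn,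
          ← Real.rpow_mul hBnn, show 1/δ * δ = 1 by field_simp,
          show (δ-1)/δ * δ = δ-1 by field_simp, Real.rpow_one]
      rw [eL, eR] at hpow
      -- hpow : C^2 * S^δ ≤ A * B^(δ-1)
      have hhalf := Real.rpow_le_rpow (by positivity) hpow (by norm_num : (0:ℝ) ≤ 1/2)
      have eL2 : (C ^ 2 * S ^ δ) ^ ((1:ℝ)/2) = C * (S ^ ((1:ℝ)/2)) ^ δ := by
        rw [Real.mul_rpow (by positivity) (by positivity),
          ← Real.rpow_natCast C 2, ← Real.rpow_mul hCpos.le,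
          ← Real.rpow_mul hSnn, ← Real.rpow_mul hSnn,
          show ((2:ℕ):ℝ) * (1/2) = 1 by norm_num, Real.rpow_one, mul_comm δ ((1:ℝ)/2)]
      have eR2 : (A * B ^ (δ-1)) ^ ((1:ℝ)/2) = (B ^ ((1:ℝ)/2)) ^ (δ-1) * A ^ ((1:ℝ)/2) := by
        rw [Real.mul_rpow hAnn (by positivity), ← Real.rpow_mul hBnn, ← Real.rpow_mul hBnn]
        rw [mul_comm (δ-1)]
        ring
      rw [eL2, eR2] at hhalf
      rw [Real.sqrt_eq_rpow, Real.sqrt_eq_rpow, Real.sqrt_eq_rpow]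
      exact hhalf
end

section
/- Let α = (α₁, α₂) ∈ ℝ² with α₁α₂ ≠ 0 and α₂/α₁ irrational algebraic of degree 2. Then there exists c > 0 with ‖∇f‖_{L²(𝕋²)}·‖α₁∂_x f + α₂∂_y f‖_{L²(𝕋²)} ≥ c‖f‖_{L²(𝕋²)}² for all mean-zero f ∈ H¹(𝕋²) (i.e. the directional Poincaré inequality holds with δ = 2). -/
open Polynomial in
lemma liouville_key (β : ℝ) (hirr : Irrational β)
    (halg : ∃ P : Polynomial ℚ, P.degree = 2 ∧ Polynomial.aeval β P = 0) :
    ∃ C > 0, ∀ ξ : ℤ × ℤ, ξ ≠ 0 → C ≤ znorm2 ξ * |(ξ.1 : ℝ) + β * ξ.2| := by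
  obtain ⟨P, hdeg, hroot⟩ := halg
  have hP0 : P ≠ 0 := fun h => by simp [h] at hdeg
  set f : Polynomial ℤ := IsLocalization.integerNormalization (nonZeroDivisors ℤ) P with hf
  have hf0 : f ≠ 0 := fun h => hP0 (IsFractionRing.integerNormalization_eq_zero_iff.mp h)
  have hfroot : Polynomial.aeval β f = 0 :=
    IsLocalization.integerNormalization_aeval_eq_zero (nonZeroDivisors ℤ) P hroot
  have hfroot' : eval β (map (algebraMap ℤ ℝ) f) = 0 := by
    rwa [Polynomial.aeval_def, ← Polynomial.eval_map] at hfroot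
  have hPnd : P.natDegree = 2 := Polynomial.natDegree_eq_of_degree_eq_some hdeg
  have hnd : f.natDegree ≤ 2 := by
    rw [Polynomial.natDegree_le_iff_coeff_eq_zero]
    intro m hm
    by_contra hc
    have := IsLocalization.coeffIntegerNormalization_mem_support (nonZeroDivisors ℤ) P m
      (by rwa [IsLocalization.integerNormalization_coeff] at hc)
    have := Polynomial.le_natDegree_of_mem_supp m this
    omega
  obtain ⟨A, hA, hL⟩ := Liouville.exists_pos_real_of_irrational_root hirr hf0 hfroot'
  refine ⟨min 1 (1 / A), lt_min one_pos (by positivity), ?_⟩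
  intro ξ hξ
  have hz1 : ∀ (η : ℤ × ℤ), |(η.2 : ℝ)| ≤ znorm2 η := by
    intro η
    rw [znorm2, ← Real.sqrt_sq_eq_abs]
    exact Real.sqrt_le_sqrt (by nlinarith [sq_nonneg ((η.1 : ℝ))])
  have hz1' : ∀ (η : ℤ × ℤ), |(η.1 : ℝ)| ≤ znorm2 η := by
    intro η
    rw [znorm2, ← Real.sqrt_sq_eq_abs]
    exact Real.sqrt_le_sqrt (by nlinarith [sq_nonneg ((η.2 : ℝ))])
  rcases eq_or_ne ξ.2 0 with h2 | h2
  · -- ξ.2 = 0, so ξ.1 ≠ 0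
    have h1 : ξ.1 ≠ 0 := fun h => hξ (Prod.ext h h2)
    have h1' : (1 : ℝ) ≤ |(ξ.1 : ℝ)| := by
      rw [← Int.cast_abs]; exact_mod_cast Int.one_le_abs h1
    have : (1:ℝ) ≤ znorm2 ξ * |(ξ.1 : ℝ) + β * ξ.2| := by
      rw [h2]
      push_cast
      rw [mul_zero, add_zero]
      calc (1:ℝ) ≤ |(ξ.1 : ℝ)| * |(ξ.1 : ℝ)| := by nlinarith
        _ ≤ znorm2 ξ * |(ξ.1 : ℝ)| := by
            have := hz1' ξ
            nlinarith
    exact le_trans (min_le_left _ _) this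
  · -- ξ.2 ≠ 0
    set n : ℕ := ξ.2.natAbs with hn
    have hn1 : 1 ≤ n := Int.natAbs_pos.mpr h2
    set q : ℤ := if 0 < ξ.2 then -ξ.1 else ξ.1 with hq
    have key := hL q (n - 1)
    have hnb : ((n - 1 : ℕ) : ℝ) + 1 = (n : ℝ) := by
      have : (n - 1) + 1 = n := Nat.succ_pred_eq_of_pos hn1
      exact_mod_cast congrArg (Nat.cast : ℕ → ℝ) this
    rw [hnb] at key
    have hnpos : (0:ℝ) < n := by exact_mod_cast hn1
    have hqn : (q : ℝ) / n = -(ξ.1 : ℝ) / ξ.2 := by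
      rcases lt_or_gt_of_ne h2 with h | h
      · have : (n : ℝ) = -(ξ.2 : ℝ) := by
          rw [hn]; push_cast [Nat.cast_natAbs]; rw [abs_of_neg (by exact_mod_cast h)]
        rw [hq, if_neg (not_lt.mpr h.le), this, div_neg, neg_div]
      · have : (n : ℝ) = (ξ.2 : ℝ) := by
          rw [hn]; push_cast [Nat.cast_natAbs]; rw [abs_of_pos (by exact_mod_cast h)]
        rw [hq, if_pos h, this]
        push_cast; ring
    have h2R : (ξ.2 : ℝ) ≠ 0 := by exact_mod_cast h2
    have habs : |β - (q : ℝ) / n| = |(ξ.1 : ℝ) + β * ξ.2| / |(ξ.2 : ℝ)| := by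
      rw [hqn, ← abs_div]
      congr 1
      field_simp
      ring
    rw [habs] at key
    -- key : 1 ≤ n ^ f.natDegree * (|ξ.1 + β ξ.2| / |ξ.2| * A)
    have hnd2 : ((n:ℝ)) ^ f.natDegree ≤ (n:ℝ) ^ 2 := by
      apply pow_le_pow_right₀ (by exact_mod_cast hn1) hnd
    have hnabs : |(ξ.2 : ℝ)| = (n : ℝ) := by
      rw [hn]; push_cast [Nat.cast_natAbs]; rfl
    have hd_nonneg : (0:ℝ) ≤ |(ξ.1 : ℝ) + β * ξ.2| / |(ξ.2 : ℝ)| * A := by positivity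
    have key2 : (1:ℝ) ≤ (n:ℝ)^2 * (|(ξ.1 : ℝ) + β * ξ.2| / |(ξ.2 : ℝ)| * A) :=
      le_trans key (mul_le_mul_of_nonneg_right hnd2 hd_nonneg)
    rw [hnabs] at key2
    -- so n * |d| * A ≥ 1, i.e. |d| ≥ 1/(A n)
    have key3 : (1:ℝ) ≤ (n:ℝ) * |(ξ.1 : ℝ) + β * ξ.2| * A := by
      have : (n:ℝ)^2 * (|(ξ.1 : ℝ) + β * ξ.2| / (n:ℝ) * A) = (n:ℝ) * |(ξ.1 : ℝ) + β * ξ.2| * A := by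
        field_simp
      linarith [key2, this ▸ key2]
    have hzn : (n : ℝ) ≤ znorm2 ξ := hnabs ▸ hz1 ξ
    have habspos : (0:ℝ) ≤ |(ξ.1 : ℝ) + β * ξ.2| := abs_nonneg _
    have : 1 / A ≤ znorm2 ξ * |(ξ.1 : ℝ) + β * ξ.2| := by
      rw [div_le_iff₀ hA]
      calc (1:ℝ) ≤ (n:ℝ) * |(ξ.1 : ℝ) + β * ξ.2| * A := key3
        _ ≤ znorm2 ξ * |(ξ.1 : ℝ) + β * ξ.2| * A := by
            apply mul_le_mul_of_nonneg_right _ hA.le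
            exact mul_le_mul_of_nonneg_right hzn habspos
    exact le_trans (min_le_right _ _) this

/-- If `α₂/α₁` is an irrational algebraic number of degree `2`, then the
directional Poincaré inequality on `𝕋²` in direction `α` holds with `δ = 2`. -/
theorem stmt10 (α₁ α₂ : ℝ) (hα : α₁ * α₂ ≠ 0) (hirr : Irrational (α₂ / α₁))
    (halg : ∃ P : Polynomial ℚ, P.degree = 2 ∧ Polynomial.aeval (α₂ / α₁) P = 0) :
    ∃ c > 0, ∀ a : ℤ × ℤ → ℂ, memH12 a → a 0 = 0 →
      gradL2norm2 a * dirL2norm2 α₁ α₂ a ≥ c * L2norm2 a ^ 2 := by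
  have hα₁ : α₁ ≠ 0 := fun h => hα (by simp [h])
  obtain ⟨C, hC, hkey⟩ := liouville_key (α₂ / α₁) hirr halg
  set c : ℝ := |α₁| * C with hc
  have hcpos : 0 < c := mul_pos (abs_pos.mpr hα₁) hC
  refine ⟨c, hcpos, ?_⟩
  intro a ha ha0
  -- pointwise lower bound on the "directional symbol"
  have hpoint : ∀ ξ : ℤ × ℤ, ξ ≠ 0 →
      c ≤ znorm2 ξ * |α₁ * (ξ.1 : ℝ) + α₂ * (ξ.2 : ℝ)| := by
    intro ξ hξ
    have h1 : α₁ * (ξ.1 : ℝ) + α₂ * (ξ.2 : ℝ) = α₁ * ((ξ.1 : ℝ) + (α₂ / α₁) * ξ.2) := by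
      field_simp
    rw [h1, abs_mul, ← mul_assoc, mul_comm (znorm2 ξ) |α₁|, mul_assoc]
    exact mul_le_mul_of_nonneg_left (hkey ξ hξ) (abs_nonneg _)
  -- notation
  set F : ℤ × ℤ → ℝ := fun ξ => znorm2 ξ * ‖a ξ‖ with hF
  set G : ℤ × ℤ → ℝ := fun ξ => |α₁ * (ξ.1 : ℝ) + α₂ * (ξ.2 : ℝ)| * ‖a ξ‖ with hG
  have hznn : ∀ ξ : ℤ × ℤ, 0 ≤ znorm2 ξ := fun ξ => Real.sqrt_nonneg _
  have hzsq : ∀ ξ : ℤ × ℤ, znorm2 ξ ^ 2 = (ξ.1 : ℝ) ^ 2 + (ξ.2 : ℝ) ^ 2 := by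
    intro ξ; exact Real.sq_sqrt (by positivity)
  have hFnn : ∀ ξ, 0 ≤ F ξ := fun ξ => mul_nonneg (hznn ξ) (norm_nonneg _)
  have hGnn : ∀ ξ, 0 ≤ G ξ := fun ξ => mul_nonneg (abs_nonneg _) (norm_nonneg _)
  -- summability facts
  have hs0 : Summable fun ξ => ‖a ξ‖ ^ 2 := by
    apply ha.of_nonneg_of_le (fun ξ => by positivity)
    intro ξ
    have := sq_nonneg (znorm2 ξ)
    nlinarith [sq_nonneg (‖a ξ‖), sq_nonneg (znorm2 ξ * ‖a ξ‖)]
  have hs1 : Summable fun ξ => F ξ ^ 2 := by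
    apply ha.of_nonneg_of_le (fun ξ => by positivity)
    intro ξ
    simp only [hF, mul_pow]
    nlinarith [sq_nonneg (‖a ξ‖)]
  have hs2 : Summable fun ξ => G ξ ^ 2 := by
    have hb := ha.mul_left (α₁ ^ 2 + α₂ ^ 2)
    apply hb.of_nonneg_of_le (fun ξ => by positivity)
    intro ξ
    simp only [hG, mul_pow, sq_abs]
    have hd : (α₁ * (ξ.1 : ℝ) + α₂ * (ξ.2 : ℝ)) ^ 2 ≤ (α₁ ^ 2 + α₂ ^ 2) * (1 + znorm2 ξ ^ 2) := by
      rw [hzsq]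
      nlinarith [sq_nonneg (α₁ * (ξ.2 : ℝ) - α₂ * (ξ.1 : ℝ)), sq_nonneg α₁, sq_nonneg α₂]
    nlinarith [sq_nonneg (‖a ξ‖)]
  -- Cauchy–Schwarz for the tsums
  have hconj : Real.HolderConjugate 2 2 := Real.holderConjugate_iff.mpr ⟨one_lt_two, by norm_num⟩
  have hrw1 : ∀ ξ, F ξ ^ (2:ℝ) = F ξ ^ 2 := fun ξ => by
    rw [show (2:ℝ) = ((2:ℕ):ℝ) by norm_num, Real.rpow_natCast]
  have hrw2 : ∀ ξ, G ξ ^ (2:ℝ) = G ξ ^ 2 := fun ξ => by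
    rw [show (2:ℝ) = ((2:ℕ):ℝ) by norm_num, Real.rpow_natCast]
  have hs1' : Summable fun ξ => F ξ ^ (2:ℝ) := by simpa only [hrw1] using hs1
  have hs2' : Summable fun ξ => G ξ ^ (2:ℝ) := by simpa only [hrw2] using hs2
  obtain ⟨hFGsum, hCS⟩ := Real.summable_and_inner_le_Lp_mul_Lq_tsum_of_nonneg hconj hFnn hGnn hs1' hs2'
  -- lower bound on ∑ F G
  have hlow : c * ∑' ξ, ‖a ξ‖ ^ 2 ≤ ∑' ξ, F ξ * G ξ := by
    rw [← tsum_mul_left]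
    apply Summable.tsum_le_tsum _ (hs0.mul_left c) hFGsum
    intro ξ
    rcases eq_or_ne ξ 0 with rfl | hξ
    · simp [hF, hG, ha0]
    · simp only [hF, hG]
      have := hpoint ξ hξ
      calc c * ‖a ξ‖ ^ 2 ≤ (znorm2 ξ * |α₁ * (ξ.1 : ℝ) + α₂ * (ξ.2 : ℝ)|) * ‖a ξ‖ ^ 2 :=
            mul_le_mul_of_nonneg_right this (sq_nonneg _)
        _ = znorm2 ξ * ‖a ξ‖ * (|α₁ * (ξ.1 : ℝ) + α₂ * (ξ.2 : ℝ)| * ‖a ξ‖) := by ring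
  -- identify the rpow expressions with the norms
  have hgrad : (∑' ξ, F ξ ^ (2:ℝ)) ^ ((1:ℝ)/2) = gradL2norm2 a := by
    rw [gradL2norm2, Real.sqrt_eq_rpow]
    congr 1
    simp only [hrw1, hF, mul_pow]
    congr 1; funext ξ; simp [mul_pow]
  have hdir : (∑' ξ, G ξ ^ (2:ℝ)) ^ ((1:ℝ)/2) = dirL2norm2 α₁ α₂ a := by
    rw [dirL2norm2, Real.sqrt_eq_rpow]
    congr 1
    simp only [hrw2, hG, mul_pow, sq_abs]
    congr 1; funext ξ; simp [mul_pow, sq_abs]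
  have hL2 : L2norm2 a ^ 2 = ∑' ξ, ‖a ξ‖ ^ 2 := by
    rw [L2norm2]
    exact Real.sq_sqrt (tsum_nonneg fun ξ => sq_nonneg _)
  rw [ge_iff_le, hL2, ← hgrad, ← hdir]
  exact hlow.trans hCS
end

section
/- Let β be a Liouville number and α = (1, β). Then for every δ ≥ 1 and every c > 0 there exists a mean-zero f ∈ H¹(𝕋²) violating ‖∇f‖_{L²}^{δ-1}‖∂_x f + β∂_y f‖_{L²} ≥ c‖f‖_{L²}^δ. In other words, no directional Poincaré inequality holds in direction (1, β). -/
/-- tsum of a function supported at a single point times the coefficient of a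
one-mode sequence. -/
lemma tsum_single_coeff (g : ℤ × ℤ → ℝ) (ξ0 : ℤ × ℤ) :
    ∑' ξ, g ξ * ‖(if ξ = ξ0 then (1 : ℂ) else 0)‖ ^ 2 = g ξ0 := by
  rw [tsum_eq_single ξ0]
  · simp
  · intro b hb; simp [hb]

/-- For a Liouville number `β`, no directional Poincaré inequality holds on `𝕋²`
in the direction `(1, β)`, for any exponent `δ ≥ 1`. -/
theorem stmt11 (β : ℝ) (hβ : Liouville β) :
    ∀ δ : ℝ, 1 ≤ δ → ∀ c > (0 : ℝ), ∃ a : ℤ × ℤ → ℂ, memH12 a ∧ a 0 = 0 ∧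
      gradL2norm2 a ^ (δ - 1) * dirL2norm2 1 β a < c * L2norm2 a ^ δ := by
  intro δ hδ c hc
  set C : ℝ := 2 + |β| with hCdef
  have hC1 : 1 ≤ C := by have := abs_nonneg β; simp only [hCdef]; linarith
  have hC0 : 0 < C := by linarith
  set K : ℝ := C ^ (δ - 1) * 2 ^ δ with hKdef
  have hK0 : 0 < K := by
    apply mul_pos (Real.rpow_pos_of_pos hC0 _) (Real.rpow_pos_of_pos two_pos _)
  obtain ⟨n, hn⟩ := exists_pow_lt_of_lt_one (show (0:ℝ) < c / K by positivity)
    (show (1:ℝ)/2 < 1 by norm_num)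
  set m := max n ⌈δ⌉₊ with hm
  have hnm : n ≤ m := le_max_left _ _
  have hδm : δ ≤ (m : ℝ) := by
    calc δ ≤ (⌈δ⌉₊ : ℝ) := Nat.le_ceil δ
    _ ≤ (m : ℝ) := by exact_mod_cast le_max_right n ⌈δ⌉₊
  obtain ⟨p, q, hq1, hne, habs⟩ := hβ m
  set ξ0 : ℤ × ℤ := (p, -q) with hξ0
  have hξ0ne : ξ0 ≠ 0 := by
    simp only [hξ0, ne_eq, Prod.mk_eq_zero, not_and]
    intro _; omega
  refine ⟨fun ξ => if ξ = ξ0 then (1 : ℂ) else 0, ?_, ?_, ?_⟩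
  · -- memH12
    apply summable_of_ne_finset_zero (s := {ξ0})
    intro b hb
    simp only [Finset.mem_singleton] at hb
    simp [hb]
  · simp [hξ0ne.symm, Ne.symm hξ0ne]
  · -- main inequality
    set Q : ℝ := (q : ℝ) with hQdef
    have hQ2 : (2 : ℝ) ≤ Q := by
      have h2q : (2:ℤ) ≤ q := hq1
      simp only [hQdef]
      exact_mod_cast h2q
    have hQ0 : 0 < Q := by linarith
    set P : ℝ := (p : ℝ) with hPdef
    -- compute the three norms
    have hL2 : L2norm2 (fun ξ => if ξ = ξ0 then (1 : ℂ) else 0) = 1 := by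
      unfold L2norm2
      have : ∑' ξ : ℤ × ℤ, ‖(if ξ = ξ0 then (1 : ℂ) else 0)‖ ^ 2 = 1 := by
        have := tsum_single_coeff (fun _ => (1 : ℝ)) ξ0
        simpa using this
      rw [this, Real.sqrt_one]
    have hgrad : gradL2norm2 (fun ξ => if ξ = ξ0 then (1 : ℂ) else 0) = znorm2 ξ0 := by
      unfold gradL2norm2
      rw [tsum_single_coeff (fun ξ => znorm2 ξ ^ 2) ξ0]
      exact Real.sqrt_sq (Real.sqrt_nonneg _)
    have hdir : dirL2norm2 1 β (fun ξ => if ξ = ξ0 then (1 : ℂ) else 0)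
        = |1 * P + β * (-Q)| := by
      unfold dirL2norm2
      rw [tsum_single_coeff (fun ξ => ((1:ℝ) * (ξ.1 : ℝ) + β * (ξ.2 : ℝ)) ^ 2) ξ0]
      simp only [hξ0]
      rw [Real.sqrt_sq_eq_abs]
      push_cast
      ring_nf
      rw [show -(β * Q) + P = ↑p - β * ↑q by simp only [hPdef, hQdef]; ring]
    rw [hL2, hgrad, hdir, Real.one_rpow, mul_one]
    -- bound on the directional term
    have habs' : |β - P / Q| < 1 / Q ^ m := habs
    have hD : |1 * P + β * (-Q)| < Q * (1 / Q ^ m) := by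
      have h1 : 1 * P + β * (-Q) = -((β - P / Q) * Q) := by
        field_simp
        ring
      rw [h1, abs_neg, abs_mul, abs_of_pos hQ0]
      rw [mul_comm Q]
      exact mul_lt_mul_of_pos_right habs' hQ0
    have hDnn : 0 ≤ |1 * P + β * (-Q)| := abs_nonneg _
    -- bound on |P|
    have hm1 : 1 ≤ m := by
      by_contra h
      push_neg at h
      interval_cases m
      · simp at hδm; linarith
    have hQm : Q * (1 / Q ^ m) ≤ 1 := by
      rw [mul_one_div, div_le_one (by positivity)]
      calc Q = Q ^ 1 := (pow_one Q).symm
      _ ≤ Q ^ m := pow_le_pow_right₀ (by linarith) hm1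
    have hP : |P| ≤ (|β| + 1) * Q := by
      have h2 : |1 * P + β * (-Q)| ≤ 1 := le_trans hD.le hQm
      have h3 : |P| ≤ |1 * P + β * (-Q)| + |β * Q| := by
        have : P = (1 * P + β * (-Q)) + β * Q := by ring
        calc |P| = |(1 * P + β * (-Q)) + β * Q| := by rw [← this]
        _ ≤ _ := abs_add_le _ _
      rw [abs_mul, abs_of_pos hQ0] at h3
      nlinarith
    -- bound on znorm2 ξ0
    have hG : znorm2 ξ0 ≤ C * Q := by
      unfold znorm2
      have hcast : ((ξ0.1 : ℝ)) ^ 2 + ((ξ0.2 : ℝ)) ^ 2 = P ^ 2 + Q ^ 2 := by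
        simp only [hξ0]; push_cast; ring
      rw [hcast]
      have hsq : P ^ 2 + Q ^ 2 ≤ (C * Q) ^ 2 := by
        have hP2 : P ^ 2 ≤ ((|β| + 1) * Q) ^ 2 := by
          calc P ^ 2 = |P| ^ 2 := (sq_abs P).symm
          _ ≤ ((|β| + 1) * Q) ^ 2 := pow_le_pow_left₀ (abs_nonneg P) hP 2
        simp only [hCdef]
        nlinarith [mul_nonneg (abs_nonneg β) (sq_nonneg Q), sq_nonneg Q]
      calc Real.sqrt (P ^ 2 + Q ^ 2) ≤ Real.sqrt ((C * Q) ^ 2) := Real.sqrt_le_sqrt hsq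
      _ = C * Q := Real.sqrt_sq (by positivity)
    have hGnn : 0 ≤ znorm2 ξ0 := Real.sqrt_nonneg _
    -- main chain
    have h1 : znorm2 ξ0 ^ (δ - 1) ≤ (C * Q) ^ (δ - 1) :=
      Real.rpow_le_rpow hGnn hG (by linarith)
    have h2 : (0:ℝ) < (C * Q) ^ (δ - 1) := Real.rpow_pos_of_pos (by positivity) _
    have hnum : (C * Q) ^ (δ - 1) * (Q * (1 / Q ^ m)) ≤ K * (1/2) ^ n := by
      have e1 : (C * Q) ^ (δ - 1) = C ^ (δ - 1) * Q ^ (δ - 1) :=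
        Real.mul_rpow hC0.le hQ0.le
      have e2 : Q * (1 / Q ^ m) = Q ^ (1 - (m : ℝ)) := by
        rw [mul_one_div, Real.rpow_sub hQ0, Real.rpow_one, Real.rpow_natCast]
      rw [e1, e2, mul_assoc, ← Real.rpow_add hQ0]
      have e3 : Q ^ (δ - 1 + (1 - (m:ℝ))) = Q ^ (δ - (m:ℝ)) := by ring_nf
      rw [e3]
      have h4 : Q ^ (δ - (m:ℝ)) ≤ (2:ℝ) ^ (δ - (m:ℝ)) := by
        have hexp : (0:ℝ) ≤ (m:ℝ) - δ := by linarith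
        have := Real.rpow_le_rpow (by norm_num : (0:ℝ) ≤ 2) hQ2 hexp
        have h2pos : (0:ℝ) < (2:ℝ) ^ ((m:ℝ) - δ) := Real.rpow_pos_of_pos two_pos _
        have e4 : Q ^ (δ - (m:ℝ)) = (Q ^ ((m:ℝ) - δ))⁻¹ := by
          rw [← Real.rpow_neg hQ0.le]; ring_nf
        have e5 : (2:ℝ) ^ (δ - (m:ℝ)) = ((2:ℝ) ^ ((m:ℝ) - δ))⁻¹ := by
          rw [← Real.rpow_neg (by norm_num : (0:ℝ) ≤ 2)]; ring_nf
        rw [e4, e5]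
        exact inv_anti₀ h2pos this
      have h5 : (2:ℝ) ^ (δ - (m:ℝ)) ≤ (2:ℝ) ^ (δ - (n:ℝ)) := by
        apply Real.rpow_le_rpow_of_exponent_le (by norm_num)
        have : (n:ℝ) ≤ (m:ℝ) := by exact_mod_cast hnm
        linarith
      have e6 : (2:ℝ) ^ (δ - (n:ℝ)) = (2:ℝ) ^ δ * ((1:ℝ)/2) ^ n := by
        rw [Real.rpow_sub two_pos, Real.rpow_natCast, div_eq_mul_inv, one_div, inv_pow]
      calc C ^ (δ - 1) * Q ^ (δ - (m:ℝ)) ≤ C ^ (δ - 1) * (2:ℝ) ^ (δ - (n:ℝ)) := by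
            apply mul_le_mul_of_nonneg_left (le_trans h4 h5) (Real.rpow_pos_of_pos hC0 _).le
      _ = K * (1/2) ^ n := by rw [e6, hKdef]; ring
    calc znorm2 ξ0 ^ (δ - 1) * |1 * P + β * (-Q)|
        ≤ (C * Q) ^ (δ - 1) * |1 * P + β * (-Q)| :=
          mul_le_mul_of_nonneg_right h1 hDnn
    _ < (C * Q) ^ (δ - 1) * (Q * (1 / Q ^ m)) := mul_lt_mul_of_pos_left hD h2
    _ ≤ K * (1/2) ^ n := hnum
    _ < c := by
        have h := (lt_div_iff₀ hK0).mp hn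
        linarith [h, mul_comm K ((1/2:ℝ)^n)]
end

section
/- Fix ℓ ∈ ℕ₀ and θ ∈ ℝ, and let C₁(ℓ,θ) be the (2ℓ+2)×(2ℓ+2) tridiagonal matrix with diagonal entries sin(θ)·(2ℓ+1−2(j−1))/2 for j = 1,…,2ℓ+2, superdiagonal entries cos(θ)·k/2 and subdiagonal entries cos(θ)·(2ℓ+2−k)/2 for k = 1,…,2ℓ+1. Then the multiset of eigenvalues of C₁(ℓ,θ) is {±1/2, ±3/2, …, ±(2ℓ+1)/2}, independent of θ. -/
open Matrix

/-- The tridiagonal matrix `C₁(ℓ,θ)` (viewed over `ℂ`): diagonal entries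
`sin θ · (2ℓ+1-2(j-1))/2`, superdiagonal `cos θ · k/2`, subdiagonal
`cos θ · (2ℓ+2-k)/2`. -/
noncomputable def C1 (ℓ : ℕ) (θ : ℝ) : Matrix (Fin (2 * ℓ + 2)) (Fin (2 * ℓ + 2)) ℂ :=
  Matrix.of fun i j =>
    if i = j then (Real.sin θ * ((2 * (ℓ : ℝ) + 1 - 2 * (i : ℕ)) / 2) : ℝ)
    else if (j : ℕ) = (i : ℕ) + 1 then (Real.cos θ * (((i : ℕ) + 1) / 2) : ℝ)
    else if (i : ℕ) = (j : ℕ) + 1 then (Real.cos θ * ((2 * (ℓ : ℝ) + 1 - (j : ℕ)) / 2) : ℝ)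
    else 0

section Stmt14Aux
open Polynomial

noncomputable def uwP (c s : ℂ) (k j : ℕ) : Polynomial ℂ :=
  (C c + C s * X) ^ k * (C (-s) + C c * X) ^ j

def keyStmt (c s : ℂ) (k j : ℕ) : Prop :=
  C (c ^ 2 - s ^ 2) * (((k : ℂ[X]) + (j : ℂ[X])) * uwP c s k j
      - 2 * (X * derivative (uwP c s k j)))
    + C (2 * c * s) * (derivative (uwP c s k j)
      + ((k : ℂ[X]) + (j : ℂ[X])) * (X * uwP c s k j)
      - X ^ 2 * derivative (uwP c s k j))
    = ((k : ℂ[X]) - (j : ℂ[X])) * uwP c s k j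

lemma uwP_key (c s : ℂ) (h : c ^ 2 + s ^ 2 = 1) : ∀ k j : ℕ, keyStmt c s k j := by
  have hC : (C c) ^ 2 + (C s) ^ 2 = (1 : ℂ[X]) := by
    have := congrArg (C : ℂ →+* ℂ[X]) h
    simpa [map_add, map_pow] using this
  have hu_step : ∀ k j : ℕ, keyStmt c s k j → keyStmt c s (k + 1) j := by
    intro k j IH
    have hsplit : uwP c s (k + 1) j = (C c + C s * X) * uwP c s k j := by
      rw [uwP, uwP, pow_succ]; ring
    unfold keyStmt at IH ⊢
    rw [hsplit, derivative_mul]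
    simp only [derivative_add, derivative_C, derivative_mul, derivative_X, zero_add,
      mul_one, zero_mul, add_zero, Nat.cast_add, Nat.cast_one, map_sub, map_mul, map_pow,
      map_neg, map_ofNat] at IH ⊢
    linear_combination (C c + C s * X) * IH + ((C c + C s * X) * uwP c s k j) * hC
  have hw_step : ∀ k j : ℕ, keyStmt c s k j → keyStmt c s k (j + 1) := by
    intro k j IH
    have hsplit : uwP c s k (j + 1) = (C (-s) + C c * X) * uwP c s k j := by
      rw [uwP, uwP, pow_succ]; ring
    unfold keyStmt at IH ⊢
    rw [hsplit, derivative_mul]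
    simp only [derivative_add, derivative_C, derivative_mul, derivative_X, zero_add,
      mul_one, zero_mul, add_zero, Nat.cast_add, Nat.cast_one, map_sub, map_mul, map_pow,
      map_neg, map_ofNat] at IH ⊢
    linear_combination (-C s + C c * X) * IH - ((-C s + C c * X) * uwP c s k j) * hC
  intro k j
  induction k with
  | zero =>
    induction j with
    | zero => unfold keyStmt uwP; simp
    | succ j IHj => exact hw_step 0 j IHj
  | succ k IHk => exact hu_step k j IHk

lemma coeff_X_sq_mul_derivative (P : ℂ[X]) (m : ℕ) :
    (X ^ 2 * derivative P).coeff (m + 1) = (m : ℂ) * P.coeff m := by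
  rcases m with _ | m
  · rw [sq, mul_assoc, Polynomial.coeff_X_mul]
    simp [Polynomial.mul_coeff_zero]
  · rw [show m + 1 + 1 = m + 2 from rfl, Polynomial.coeff_X_pow_mul (derivative P) 2 m,
      Polynomial.coeff_derivative]
    push_cast; ring

lemma uwP_coeff_zero (c s : ℂ) (h : c ^ 2 + s ^ 2 = 1) (k j : ℕ) :
    (c ^ 2 - s ^ 2) * ((k : ℂ) + j) * (uwP c s k j).coeff 0
      + 2 * c * s * (uwP c s k j).coeff 1
      = ((k : ℂ) - j) * (uwP c s k j).coeff 0 := by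
  have E := uwP_key c s h k j
  unfold keyStmt at E
  have e1 : ((k : ℂ[X]) + (j : ℂ[X])) = C ((k : ℂ) + (j : ℂ)) := by
    rw [map_add, map_natCast, map_natCast]
  have e2 : ((k : ℂ[X]) - (j : ℂ[X])) = C ((k : ℂ) - (j : ℂ)) := by
    rw [map_sub, map_natCast, map_natCast]
  have e3 : (2 : ℂ[X]) = C 2 := by rw [map_ofNat]
  rw [e1, e2, e3] at E
  have := congrArg (fun q : ℂ[X] => q.coeff 0) E
  simp only [Polynomial.coeff_add, Polynomial.coeff_sub, Polynomial.coeff_C_mul,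
    Polynomial.mul_coeff_zero, Polynomial.coeff_X_zero, Polynomial.coeff_derivative,
    Polynomial.coeff_X_pow, Polynomial.coeff_C_zero, zero_mul, mul_zero, add_zero,
    sub_zero, zero_add] at this
  push_cast at this ⊢
  linear_combination this

lemma uwP_coeff_succ (c s : ℂ) (h : c ^ 2 + s ^ 2 = 1) (k j m : ℕ) :
    (c ^ 2 - s ^ 2) * (((k : ℂ) + j) - 2 * ((m : ℂ) + 1)) * (uwP c s k j).coeff (m + 1)
      + 2 * c * s * ((m : ℂ) + 2) * (uwP c s k j).coeff (m + 2)
      + 2 * c * s * (((k : ℂ) + j) - m) * (uwP c s k j).coeff m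
      = ((k : ℂ) - j) * (uwP c s k j).coeff (m + 1) := by
  have E := uwP_key c s h k j
  unfold keyStmt at E
  have e1 : ((k : ℂ[X]) + (j : ℂ[X])) = C ((k : ℂ) + (j : ℂ)) := by
    rw [map_add, map_natCast, map_natCast]
  have e2 : ((k : ℂ[X]) - (j : ℂ[X])) = C ((k : ℂ) - (j : ℂ)) := by
    rw [map_sub, map_natCast, map_natCast]
  have e3 : (2 : ℂ[X]) = C 2 := by rw [map_ofNat]
  rw [e1, e2, e3] at E
  have := congrArg (fun q : ℂ[X] => q.coeff (m + 1)) E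
  simp only [Polynomial.coeff_add, Polynomial.coeff_sub, Polynomial.coeff_C_mul,
    Polynomial.coeff_X_mul, Polynomial.coeff_derivative,
    coeff_X_sq_mul_derivative, Polynomial.coeff_C_zero] at this
  push_cast at this ⊢
  linear_combination this

lemma uwP_natDegree_le (c s : ℂ) (k j : ℕ) : (uwP c s k j).natDegree ≤ k + j := by
  unfold uwP
  refine le_trans (Polynomial.natDegree_mul_le) (add_le_add ?_ ?_)
  · refine le_trans (Polynomial.natDegree_pow_le) ?_
    have h1 : (C c + C s * X).natDegree ≤ 1 := by compute_degree
    calc k * (C c + C s * X).natDegree ≤ k * 1 := Nat.mul_le_mul_left k h1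
    _ = k := by omega
  · refine le_trans (Polynomial.natDegree_pow_le) ?_
    have h1 : (C (-s) + C c * X).natDegree ≤ 1 := by compute_degree
    calc j * (C (-s) + C c * X).natDegree ≤ j * 1 := Nat.mul_le_mul_left j h1
    _ = j := by omega

lemma uwP_ne_zero (c s : ℂ) (h : c ^ 2 + s ^ 2 = 1) (k j : ℕ) : uwP c s k j ≠ 0 := by
  have hcs : c ≠ 0 ∨ s ≠ 0 := by
    by_contra hcon
    push_neg at hcon
    rw [hcon.1, hcon.2] at h
    simp at h
  have hu : (C c + C s * X) ≠ 0 := by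
    rcases hcs with hc | hs
    · intro h0; apply hc
      have := congrArg (fun q : ℂ[X] => q.coeff 0) h0
      simpa using this
    · intro h0; apply hs
      have := congrArg (fun q : ℂ[X] => q.coeff 1) h0
      simpa using this
  have hw : (C (-s) + C c * X) ≠ 0 := by
    rcases hcs with hc | hs
    · intro h0; apply hc
      have := congrArg (fun q : ℂ[X] => q.coeff 1) h0
      simpa using this
    · intro h0; apply hs
      have := congrArg (fun q : ℂ[X] => q.coeff 0) h0
      simpa using this
  unfold uwP
  exact mul_ne_zero (pow_ne_zero _ hu) (pow_ne_zero _ hw)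

lemma eval_charpoly_eq {n : ℕ} (M : Matrix (Fin n) (Fin n) ℂ) (t : ℂ) :
    M.charpoly.eval t = (t • (1 : Matrix (Fin n) (Fin n) ℂ) - M).det := by
  rw [Matrix.charpoly, ← Polynomial.coe_evalRingHom, RingHom.map_det]
  congr 1
  ext i j
  by_cases hij : i = j
  · subst hij
    simp [Matrix.charmatrix_apply_eq, Matrix.one_apply]
  · simp [Matrix.charmatrix_apply_ne _ _ _ hij, Matrix.one_apply, hij]

end Stmt14Aux

/-- The multiset of eigenvalues of `C₁(ℓ,θ)` is `{±1/2, ±3/2, …, ±(2ℓ+1)/2}`,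
independently of `θ`. -/
theorem stmt14 (ℓ : ℕ) (θ : ℝ) :
    (C1 ℓ θ).charpoly.roots =
      Multiset.map (fun j : Fin (2 * ℓ + 2) => ((2 * (ℓ : ℂ) + 1 - 2 * (j : ℕ)) / 2))
        Finset.univ.val := by
  classical
  set n := 2 * ℓ + 2 with hn
  set c : ℂ := (Real.cos (Real.pi / 4 - θ / 2) : ℂ) with hcdef
  set s : ℂ := (Real.sin (Real.pi / 4 - θ / 2) : ℂ) with hsdef
  have h1 : c ^ 2 + s ^ 2 = 1 := by
    rw [hcdef, hsdef]
    have h0 : Real.cos (Real.pi / 4 - θ / 2) ^ 2 + Real.sin (Real.pi / 4 - θ / 2) ^ 2 = 1 := by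
      have := Real.sin_sq_add_cos_sq (Real.pi / 4 - θ / 2)
      linarith
    exact_mod_cast h0
  have ha : c ^ 2 - s ^ 2 = (Real.sin θ : ℂ) := by
    rw [hcdef, hsdef]
    have h2 : Real.cos (Real.pi / 4 - θ / 2) ^ 2 - Real.sin (Real.pi / 4 - θ / 2) ^ 2
        = Real.sin θ := by
      have hpy := Real.sin_sq_add_cos_sq (Real.pi / 4 - θ / 2)
      have hc2 := Real.cos_two_mul (Real.pi / 4 - θ / 2)
      rw [show 2 * (Real.pi / 4 - θ / 2) = Real.pi / 2 - θ by ring,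
        Real.cos_pi_div_two_sub] at hc2
      linarith
    exact_mod_cast h2
  have hb : 2 * c * s = (Real.cos θ : ℂ) := by
    rw [hcdef, hsdef]
    have h2 : 2 * Real.cos (Real.pi / 4 - θ / 2) * Real.sin (Real.pi / 4 - θ / 2)
        = Real.cos θ := by
      have := Real.sin_two_mul (Real.pi / 4 - θ / 2)
      rw [show 2 * (Real.pi / 4 - θ / 2) = Real.pi / 2 - θ by ring,
        Real.sin_pi_div_two_sub] at this
      linarith
    exact_mod_cast h2
  set f : Fin n → ℂ := fun j => (2 * (ℓ : ℂ) + 1 - 2 * (j : ℕ)) / 2 with hf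
  have hroot : ∀ j : Fin n, f j ∈ (C1 ℓ θ).charpoly.roots := by
    intro j
    have hjlt : (j : ℕ) < n := j.isLt
    have hjle : (j : ℕ) ≤ 2 * ℓ + 1 := by omega
    set k := 2 * ℓ + 1 - (j : ℕ) with hk
    have hkj : k + (j : ℕ) = 2 * ℓ + 1 := by omega
    set P := uwP c s k (j : ℕ) with hP
    have hkc : (k : ℂ) = 2 * (ℓ : ℂ) + 1 - ((j : ℕ) : ℂ) := by
      rw [hk]
      push_cast [Nat.cast_sub hjle]
      ring
    have hNc : (k : ℂ) + ((j : ℕ) : ℂ) = 2 * (ℓ : ℂ) + 1 := by rw [hkc]; ring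
    have hfj : f j = ((k : ℂ) - ((j : ℕ) : ℂ)) / 2 := by rw [hf]; rw [hkc]; ring
    set v : Fin n → ℂ := fun i => P.coeff (i : ℕ) with hv
    have hdeg : P.natDegree ≤ 2 * ℓ + 1 := le_trans (uwP_natDegree_le c s k (j : ℕ)) (by omega)
    have hPne : P ≠ 0 := uwP_ne_zero c s h1 _ _
    have hvne : v ≠ 0 := by
      intro h0
      have hlt : P.natDegree < n := by omega
      have h2 := congrFun h0 ⟨P.natDegree, hlt⟩
      simp only [hv, Pi.zero_apply] at h2
      exact hPne (Polynomial.leadingCoeff_eq_zero.mp h2)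
    have hee : ∀ i : Fin n, (C1 ℓ θ).mulVec v i = f j * v i := by
      intro i
      have hilt : (i : ℕ) < n := i.isLt
      -- entrywise description of the row
      have step1 : ∀ t : Fin n, C1 ℓ θ i t * v t =
          (if (t : ℕ) = (i : ℕ) then
              (Real.sin θ : ℂ) * ((2 * (ℓ : ℂ) + 1 - 2 * ((i : ℕ) : ℂ)) / 2) * P.coeff (i : ℕ)
            else 0)
          + (if (t : ℕ) = (i : ℕ) + 1 then
              (Real.cos θ : ℂ) * ((((i : ℕ) : ℂ) + 1) / 2) * P.coeff ((i : ℕ) + 1)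
            else 0)
          + (if (t : ℕ) + 1 = (i : ℕ) then
              (Real.cos θ : ℂ) * ((2 * (ℓ : ℂ) + 1 - ((t : ℕ) : ℂ)) / 2) * P.coeff (t : ℕ)
            else 0) := by
        intro t
        by_cases h₁ : i = t
        · subst h₁
          have e2 : ¬((i : ℕ) = (i : ℕ) + 1) := by omega
          have e3 : ¬((i : ℕ) + 1 = (i : ℕ)) := by omega
          simp only [C1, Matrix.of_apply, if_pos rfl, if_neg e2, if_neg e3, add_zero]
          push_cast
          ring
        · have h₁' : ¬((t : ℕ) = (i : ℕ)) := fun h => h₁ (Fin.ext h.symm)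
          by_cases h₂ : (t : ℕ) = (i : ℕ) + 1
          · have e3 : ¬((t : ℕ) + 1 = (i : ℕ)) := by omega
            simp only [C1, Matrix.of_apply, if_neg h₁, if_pos h₂, if_neg h₁', if_neg e3,
              add_zero, zero_add]
            rw [hv]
            push_cast [h₂]
            ring
          · by_cases h₃ : (i : ℕ) = (t : ℕ) + 1
            · have e3 : (t : ℕ) + 1 = (i : ℕ) := h₃.symm
              simp only [C1, Matrix.of_apply, if_neg h₁, if_neg h₂, if_pos h₃, if_neg h₁',
                if_pos e3, zero_add]
              rw [hv]
              push_cast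
              ring
            · have e3 : ¬((t : ℕ) + 1 = (i : ℕ)) := fun h => h₃ h.symm
              simp only [C1, Matrix.of_apply, if_neg h₁, if_neg h₂, if_neg h₃, if_neg h₁',
                if_neg e3, add_zero, zero_mul]
      have hsum : (C1 ℓ θ).mulVec v i = ∑ t ∈ Finset.range n,
          ((if t = (i : ℕ) then
              (Real.sin θ : ℂ) * ((2 * (ℓ : ℂ) + 1 - 2 * ((i : ℕ) : ℂ)) / 2) * P.coeff (i : ℕ)
            else 0)
          + (if t = (i : ℕ) + 1 then
              (Real.cos θ : ℂ) * ((((i : ℕ) : ℂ) + 1) / 2) * P.coeff ((i : ℕ) + 1)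
            else 0)
          + (if t + 1 = (i : ℕ) then
              (Real.cos θ : ℂ) * ((2 * (ℓ : ℂ) + 1 - (t : ℂ)) / 2) * P.coeff t
            else 0)) := by
        rw [Matrix.mulVec, dotProduct]
        rw [Finset.sum_congr rfl (fun t _ => step1 t)]
        exact Fin.sum_univ_eq_sum_range (fun t =>
          (if t = (i : ℕ) then
              (Real.sin θ : ℂ) * ((2 * (ℓ : ℂ) + 1 - 2 * ((i : ℕ) : ℂ)) / 2) * P.coeff (i : ℕ)
            else 0)
          + (if t = (i : ℕ) + 1 then
              (Real.cos θ : ℂ) * ((((i : ℕ) : ℂ) + 1) / 2) * P.coeff ((i : ℕ) + 1)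
            else 0)
          + (if t + 1 = (i : ℕ) then
              (Real.cos θ : ℂ) * ((2 * (ℓ : ℂ) + 1 - (t : ℂ)) / 2) * P.coeff t
            else 0)) n
      rw [hsum, Finset.sum_add_distrib, Finset.sum_add_distrib]
      have S1 : (∑ t ∈ Finset.range n, if t = (i : ℕ) then
          (Real.sin θ : ℂ) * ((2 * (ℓ : ℂ) + 1 - 2 * ((i : ℕ) : ℂ)) / 2) * P.coeff (i : ℕ)
          else 0) =
          (Real.sin θ : ℂ) * ((2 * (ℓ : ℂ) + 1 - 2 * ((i : ℕ) : ℂ)) / 2) * P.coeff (i : ℕ) := by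
        rw [Finset.sum_ite_eq' (Finset.range n) (i : ℕ)]
        rw [if_pos (Finset.mem_range.mpr hilt)]
      have S2 : (∑ t ∈ Finset.range n, if t = (i : ℕ) + 1 then
          (Real.cos θ : ℂ) * ((((i : ℕ) : ℂ) + 1) / 2) * P.coeff ((i : ℕ) + 1) else 0) =
          (Real.cos θ : ℂ) * ((((i : ℕ) : ℂ) + 1) / 2) * P.coeff ((i : ℕ) + 1) := by
        rw [Finset.sum_ite_eq' (Finset.range n) ((i : ℕ) + 1)]
        by_cases hmem : (i : ℕ) + 1 < n
        · rw [if_pos (Finset.mem_range.mpr hmem)]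
        · rw [if_neg (fun hh => hmem (Finset.mem_range.mp hh))]
          have : P.coeff ((i : ℕ) + 1) = 0 := by
            apply Polynomial.coeff_eq_zero_of_natDegree_lt
            omega
          rw [this, mul_zero]
      have S3 : (∑ t ∈ Finset.range n, if t + 1 = (i : ℕ) then
          (Real.cos θ : ℂ) * ((2 * (ℓ : ℂ) + 1 - (t : ℂ)) / 2) * P.coeff t else 0) =
          (if (i : ℕ) = 0 then 0 else
            (Real.cos θ : ℂ) * ((2 * (ℓ : ℂ) + 1 - (((i : ℕ) - 1 : ℕ) : ℂ)) / 2)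
              * P.coeff ((i : ℕ) - 1)) := by
        have rewr : ∀ t : ℕ, (if t + 1 = (i : ℕ) then
            (Real.cos θ : ℂ) * ((2 * (ℓ : ℂ) + 1 - (t : ℂ)) / 2) * P.coeff t else 0)
            = (if t = (i : ℕ) - 1 then (if (i : ℕ) = 0 then 0 else
              (Real.cos θ : ℂ) * ((2 * (ℓ : ℂ) + 1 - (t : ℂ)) / 2) * P.coeff t) else 0) := by
          intro t
          split_ifs with g1 g2 g3 g4 <;> first | rfl | omega
        rw [Finset.sum_congr rfl (fun t _ => rewr t)]
        rw [Finset.sum_ite_eq' (Finset.range n) ((i : ℕ) - 1)]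
        rw [if_pos (Finset.mem_range.mpr (by omega))]
      rw [S1, S2, S3, hfj, show v i = P.coeff (i : ℕ) from rfl]
      rcases hi : (i : ℕ) with _ | m
      · simp only [↓reduceIte]
        have key := uwP_coeff_zero c s h1 k (j : ℕ)
        rw [← hP] at key
        rw [← ha, ← hb]
        push_cast
        linear_combination key / 2 - (P.coeff 0 / 2) * ((c ^ 2 - s ^ 2) * hNc)
      · rw [if_neg (by omega : ¬ (m + 1 = 0))]
        have key := uwP_coeff_succ c s h1 k (j : ℕ) m
        rw [← hP] at key
        rw [← ha, ← hb]
        have hm1 : (m + 1 : ℕ) - 1 = m := by omega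
        rw [hm1]
        push_cast
        linear_combination key / 2
          - ((P.coeff (m + 1) / 2) * (c ^ 2 - s ^ 2) + (c * s) * P.coeff m) * hNc
    have hdet : ((f j) • (1 : Matrix (Fin n) (Fin n) ℂ) - C1 ℓ θ).det = 0 := by
      rw [← Matrix.exists_mulVec_eq_zero_iff]
      refine ⟨v, hvne, ?_⟩
      funext i
      rw [Matrix.sub_mulVec]
      simp only [Pi.sub_apply, Matrix.smul_mulVec, Matrix.one_mulVec, Pi.smul_apply,
        smul_eq_mul, Pi.zero_apply]
      rw [hee i]
      ring
    rw [Polynomial.mem_roots ((Matrix.charpoly_monic _).ne_zero)]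
    rw [Polynomial.IsRoot, eval_charpoly_eq]
    exact hdet
  -- counting argument
  have hinj : Function.Injective f := by
    intro x y hxy
    rw [hf] at hxy
    have hcast : ((x : ℕ) : ℂ) = ((y : ℕ) : ℂ) := by linear_combination -hxy
    exact Fin.ext (Nat.cast_inj.mp hcast)
  have hnodup : (Multiset.map f Finset.univ.val).Nodup :=
    (Finset.univ.nodup).map hinj
  have hle : Multiset.map f Finset.univ.val ≤ (C1 ℓ θ).charpoly.roots := by
    rw [Multiset.le_iff_count]
    intro x
    by_cases hx : x ∈ Multiset.map f Finset.univ.val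
    · rw [Multiset.count_eq_one_of_mem hnodup hx]
      obtain ⟨j, _, rfl⟩ := Multiset.mem_map.mp hx
      exact Multiset.one_le_count_iff_mem.mpr (hroot j)
    · rw [Multiset.count_eq_zero_of_notMem hx]
      omega
  have hcard : Multiset.card ((C1 ℓ θ).charpoly.roots)
      ≤ Multiset.card (Multiset.map f Finset.univ.val) := by
    rw [Multiset.card_map]
    have h2 : Multiset.card (Finset.univ.val : Multiset (Fin n)) = n := by
      simp
    rw [h2]
    calc Multiset.card ((C1 ℓ θ).charpoly.roots) ≤ (C1 ℓ θ).charpoly.natDegree :=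
          Polynomial.card_roots' _
      _ = Fintype.card (Fin n) := Matrix.charpoly_natDegree_eq_dim _
      _ = n := Fintype.card_fin n
  exact (Multiset.eq_of_le_of_card_le hle hcard).symm
end
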